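/- arXiv:math/0112256 — 4 statements merged into one kernel-verified Lean document; each statement's English description precedes it below -/
import Mathlib

section
/- If a real symmetric n×n matrix A has all eigenvalues in the cone Γ_k^+ (i.e., σ_j(A) > 0 for all j ≤ k), then the Newton transformation T_{k-1}(A) is positive definite. -/
set_option linter.unusedSectionVars false
set_option maxHeartbeats 1000000


open Finset Polynomial

noncomputable def esymm (n k : ℕ) (x : Fin n → ℝ) : ℝ :=
  ∑ s ∈ (Finset.univ : Finset (Fin n)).powersetCard k, ∏ i ∈ s, x i

/-- σ_k(A): k-th elementary symmetric function of the eigenvalues,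
equivalently the t^k coefficient in det(I + tA). -/
noncomputable def sigmaMat (n k : ℕ) (A : Matrix (Fin n) (Fin n) ℝ) : ℝ :=
  (-1 : ℝ) ^ k * (A.charpoly.coeff (n - k))

/-- The k-th Newton transformation T_k(A) = ∑_{i≤k} (-1)^i σ_{k-i}(A) A^i. -/
noncomputable def newtonT (n k : ℕ) (A : Matrix (Fin n) (Fin n) ℝ) :
    Matrix (Fin n) (Fin n) ℝ :=
  ∑ i ∈ Finset.range (k + 1), ((-1 : ℝ) ^ i * sigmaMat n (k - i) A) • A ^ i

section Aux
variable {ι : Type*} [DecidableEq ι]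

noncomputable def esymmOn (s : Finset ι) (k : ℕ) (x : ι → ℝ) : ℝ :=
  ∑ t ∈ s.powersetCard k, ∏ i ∈ t, x i

lemma esymmOn_zero (s : Finset ι) (x : ι → ℝ) : esymmOn s 0 x = 1 := by
  simp [esymmOn]

lemma esymmOn_eq_zero {s : Finset ι} {k : ℕ} (h : s.card < k) (x : ι → ℝ) :
    esymmOn s k x = 0 := by
  rw [esymmOn, Finset.powersetCard_eq_empty.mpr h, Finset.sum_empty]

lemma coeff_prod_X_add_C (s : Finset ι) (x : ι → ℝ) {j : ℕ} (hj : j ≤ s.card) :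
    (∏ a ∈ s, (X + C (x a))).coeff (s.card - j) = esymmOn s j x := by
  rw [Finset.prod_X_add_C_coeff s x (Nat.sub_le _ _), esymmOn,
    Nat.sub_sub_self hj]

lemma esymmOn_pos {s : Finset ι} {k : ℕ} {x : ι → ℝ} (hx : ∀ a ∈ s, 0 < x a)
    (hk : k ≤ s.card) : 0 < esymmOn s k x := by
  apply Finset.sum_pos
  · intro t ht
    rw [Finset.mem_powersetCard] at ht
    exact Finset.prod_pos fun a ha => hx a (ht.1 ha)
  · exact Finset.powersetCard_nonempty.2 hk

lemma esymmOn_insert {t : Finset ι} {i : ι} (hi : i ∉ t) (m : ℕ) (x : ι → ℝ) :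
    esymmOn (insert i t) (m + 1) x
      = esymmOn t (m + 1) x + x i * esymmOn t m x := by
  rw [esymmOn, Finset.powersetCard_succ_insert hi, Finset.sum_union, Finset.sum_image]
  · congr 1
    rw [esymmOn, Finset.mul_sum]
    apply Finset.sum_congr rfl
    intro u hu
    rw [Finset.mem_powersetCard] at hu
    have hiu : i ∉ u := fun hmem => hi (hu.1 hmem)
    rw [Finset.prod_insert hiu]
  · intro u hu v hv huv
    rw [Finset.mem_coe, Finset.mem_powersetCard] at hu hv
    have hiu : i ∉ u := fun hmem => hi (hu.1 hmem)
    have hiv : i ∉ v := fun hmem => hi (hv.1 hmem)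
    have := congrArg (fun (w : Finset ι) => w.erase i) huv
    simpa [Finset.erase_insert hiu, Finset.erase_insert hiv] using this
  · rw [Finset.disjoint_left]
    intro u hu hu'
    rw [Finset.mem_powersetCard] at hu
    rw [Finset.mem_image] at hu'
    obtain ⟨v, hv, rfl⟩ := hu'
    exact hi (hu.1 (Finset.mem_insert_self i v))

lemma esymmOn_rec {s : Finset ι} {i : ι} (hi : i ∈ s) (m : ℕ) (x : ι → ℝ) :
    esymmOn s (m + 1) x
      = esymmOn (s.erase i) (m + 1) x + x i * esymmOn (s.erase i) m x := by
  conv_lhs => rw [← Finset.insert_erase hi]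
  exact esymmOn_insert (Finset.notMem_erase i s) m x

lemma esymmOn_alt {s : Finset ι} {i : ι} (hi : i ∈ s) (m : ℕ) (x : ι → ℝ) :
    ∑ j ∈ Finset.range (m + 1), (-1 : ℝ) ^ j * esymmOn s (m - j) x * x i ^ j
      = esymmOn (s.erase i) m x := by
  induction m with
  | zero => simp [esymmOn_zero]
  | succ m ih =>
    rw [Finset.sum_range_succ']
    have h2 : ∀ j ∈ Finset.range (m + 1),
        (-1 : ℝ) ^ (j+1) * esymmOn s (m + 1 - (j+1)) x * x i ^ (j+1)
        = -x i * ((-1 : ℝ) ^ j * esymmOn s (m - j) x * x i ^ j) := by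
      intro j hj
      have : m + 1 - (j + 1) = m - j := by omega
      rw [this, pow_succ, pow_succ]
      ring
    rw [Finset.sum_congr rfl h2, ← Finset.mul_sum, ih]
    simp only [pow_zero, Nat.sub_zero, one_mul, mul_one]
    rw [esymmOn_rec hi m x]
    ring

/-- Laguerre-type inequality: for a real-rooted polynomial `p = ∏ (X - r)`,
`p'(x)^2 ≥ p''(x) p(x)` for every real `x`. -/
lemma laguerre (m : Multiset ℝ) (x : ℝ) :
    (eval x (derivative (derivative ((m.map fun r => X - C r).prod)))) *
      eval x ((m.map fun r => X - C r).prod)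
    ≤ (eval x (derivative ((m.map fun r => X - C r).prod))) ^ 2 := by
  induction m using Multiset.induction_on with
  | empty => simp
  | cons r m ih =>
    rw [Multiset.map_cons, Multiset.prod_cons]
    set q : ℝ[X] := (m.map fun r => X - C r).prod with hq
    have hd : derivative ((X - C r) * q) = q + (X - C r) * derivative q := by
      rw [derivative_mul, derivative_sub, derivative_X, derivative_C, sub_zero, one_mul]
    have hdd : derivative (derivative ((X - C r) * q))
        = 2 * derivative q + (X - C r) * derivative (derivative q) := by
      rw [hd, derivative_add, derivative_mul, derivative_sub, derivative_X, derivative_C,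
        sub_zero, one_mul]
      ring
    rw [hdd, hd]
    simp only [eval_add, eval_mul, eval_sub, eval_X, eval_C, eval_ofNat]
    set a := eval x q
    set b := eval x (derivative q)
    set e := eval x (derivative (derivative q))
    set t := x - r
    nlinarith [sq_nonneg a, sq_nonneg t, mul_nonneg (sq_nonneg t) (sub_nonneg.2 ih)]

lemma realRooted_derivative {p : ℝ[X]} (hp : Multiset.card p.roots = p.natDegree) :
    Multiset.card (derivative p).roots = (derivative p).natDegree ∧
      (derivative p).natDegree = p.natDegree - 1 := by
  have h1 := p.card_roots_le_derivative
  have h2 := (derivative p).card_roots'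
  have h3 := p.natDegree_derivative_le
  omega

lemma realRooted_iterate {p : ℝ[X]} (hp : Multiset.card p.roots = p.natDegree) (d : ℕ) :
    Multiset.card (derivative^[d] p).roots = (derivative^[d] p).natDegree ∧
      (derivative^[d] p).natDegree = p.natDegree - d := by
  induction d with
  | zero => simpa using hp
  | succ d ih =>
    rw [Function.iterate_succ_apply']
    obtain ⟨h1, h2⟩ := ih
    obtain ⟨h3, h4⟩ := realRooted_derivative h1
    exact ⟨h3, by omega⟩

lemma newton_contradiction {ι : Type*} [DecidableEq ι] (s : Finset ι) (y : ι → ℝ) (Q : ℕ)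
    (hq : Q + 2 ≤ s.card) (h0 : 0 < esymmOn s Q y) (h1 : esymmOn s (Q + 1) y = 0)
    (h2 : 0 < esymmOn s (Q + 2) y) : False := by
  classical
  set F : ℝ[X] := ∏ a ∈ s, (X + C (y a)) with hFdef
  have hF : F = ((s.val.map fun a => -(y a)).map fun r => X - C r).prod := by
    rw [hFdef, Finset.prod, Multiset.map_map]
    congr 1
    apply Multiset.map_congr rfl
    intro a _
    simp [sub_neg_eq_add]
  have hroots : F.roots = s.val.map fun a => -(y a) := by
    rw [hF, roots_multiset_prod_X_sub_C]
  have hdeg : F.natDegree = s.card := by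
    rw [hFdef, natDegree_prod_of_monic _ _ (fun a _ => monic_X_add_C (y a))]
    simp [natDegree_X_add_C]
  have hcard : Multiset.card F.roots = F.natDegree := by
    rw [hroots, Multiset.card_map, hdeg]; rfl
  set d := s.card - (Q + 2) with hd
  set h : ℝ[X] := derivative^[d] F with hh
  obtain ⟨hrr, hdh⟩ := realRooted_iterate hcard d
  have hcoeff : ∀ m : ℕ, m ≤ 2 →
      h.coeff m = ((m + d).descFactorial d : ℝ) * esymmOn s (Q + 2 - m) y := by
    intro m hm
    rw [hh, Polynomial.coeff_iterate_derivative, nsmul_eq_mul]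
    congr 1
    have hmd : m + d = s.card - (Q + 2 - m) := by omega
    rw [hmd, coeff_prod_X_add_C s y (by omega)]
  have hdescpos : ∀ m : ℕ, 0 < ((m + d).descFactorial d : ℝ) := by
    intro m
    have : (m + d).descFactorial d ≠ 0 := by
      rw [Ne, Nat.descFactorial_eq_zero_iff_lt]
      omega
    exact_mod_cast Nat.pos_of_ne_zero this
  have hc0 : 0 < h.coeff 0 := by
    rw [hcoeff 0 (by omega)]
    exact mul_pos (hdescpos 0) h2
  have hc1 : h.coeff 1 = 0 := by
    rw [hcoeff 1 (by omega)]
    have : Q + 2 - 1 = Q + 1 := by omega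
    rw [this, h1, mul_zero]
  have hc2 : 0 < h.coeff 2 := by
    rw [hcoeff 2 (by omega)]
    have : Q + 2 - 2 = Q := by omega
    rw [this]
    exact mul_pos (hdescpos 2) h0
  have hsplits : Splits h := splits_iff_card_roots.mpr hrr
  have hP : h = C h.leadingCoeff * (h.roots.map fun a => X - C a).prod :=
    hsplits.eq_prod_roots
  have lag := laguerre h.roots 0
  set P : ℝ[X] := (h.roots.map fun a => X - C a).prod
  have key : eval 0 (derivative (derivative h)) * eval 0 h ≤ (eval 0 (derivative h)) ^ 2 := by
    rw [hP, derivative_C_mul, derivative_C_mul]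
    simp only [eval_mul, eval_C]
    nlinarith [lag, sq_nonneg h.leadingCoeff, sq_nonneg (eval 0 (derivative P))]
  have e0 : eval 0 h = h.coeff 0 := (coeff_zero_eq_eval_zero h).symm
  have e1 : eval 0 (derivative h) = h.coeff 1 := by
    rw [← coeff_zero_eq_eval_zero, coeff_derivative]
    push_cast
    ring
  have e2 : eval 0 (derivative (derivative h)) = 2 * h.coeff 2 := by
    rw [← coeff_zero_eq_eval_zero, coeff_derivative, coeff_derivative]
    push_cast
    ring
  rw [e0, e1, e2, hc1] at key
  nlinarith [key, hc0, hc2]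

lemma natDegree_prod_X_add_C' {ι : Type*} [DecidableEq ι] (s : Finset ι) (x : ι → ℝ) :
    (∏ a ∈ s, (X + C (x a))).natDegree = s.card := by
  rw [natDegree_prod_of_monic _ _ (fun a _ => monic_X_add_C (x a))]
  simp [natDegree_X_add_C]

lemma esymmOn_shift_pos {ι : Type*} [DecidableEq ι] (s : Finset ι) (x : ι → ℝ) (J : ℕ)
    (hJ : ∀ j, 1 ≤ j → j ≤ J → 0 < esymmOn s j x) {t : ℝ} (ht : 0 ≤ t)
    {j : ℕ} (hj1 : 1 ≤ j) (hjJ : j ≤ J) (hjc : j ≤ s.card) :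
    0 < esymmOn s j fun a => x a + t := by
  classical
  set F : ℝ[X] := ∏ a ∈ s, (X + C (x a)) with hFdef
  set D := s.card - j with hD
  have hcomp : (∏ a ∈ s, (X + C (x a + t))) = taylor t F := by
    rw [taylor_apply, hFdef, Polynomial.prod_comp]
    apply Finset.prod_congr rfl
    intro a _
    rw [add_comp, X_comp, C_comp, C_add]
    ring
  have h1 : esymmOn s j (fun a => x a + t) = (taylor t F).coeff D := by
    rw [← hcomp, ← coeff_prod_X_add_C s (fun a => x a + t) hjc]
  rw [h1, taylor_coeff]
  rw [eval_eq_sum_range]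
  apply Finset.sum_pos'
  · intro i _
    apply mul_nonneg _ (pow_nonneg ht i)
    rw [hasseDeriv_coeff]
    apply mul_nonneg (by positivity)
    by_cases hid : i + D ≤ s.card
    · have hij : i ≤ j := by omega
      have : i + D = s.card - (j - i) := by omega
      rw [this, coeff_prod_X_add_C s x (by omega)]
      rcases Nat.eq_zero_or_pos (j - i) with h | h
      · rw [h, esymmOn_zero]; norm_num
      · exact (hJ (j - i) h (by omega)).le
    · rw [coeff_eq_zero_of_natDegree_lt]
      rw [natDegree_prod_X_add_C']
      omega
  · refine ⟨0, Finset.mem_range.mpr (Nat.succ_pos _), ?_⟩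
    rw [hasseDeriv_coeff, pow_zero, mul_one, Nat.zero_add, Nat.choose_self]
    have : (D : ℕ) = s.card - j := hD
    rw [Nat.cast_one, one_mul, coeff_prod_X_add_C s x hjc]
    exact hJ j hj1 (le_trans hjJ (le_refl J))

lemma esymmOn_continuous {ι : Type*} [DecidableEq ι] (s : Finset ι) (k : ℕ) (x : ι → ℝ) :
    Continuous fun t : ℝ => esymmOn s k fun a => x a + t := by
  unfold esymmOn
  apply continuous_finset_sum
  intro u _
  apply continuous_finset_prod
  intro a _
  exact continuous_const.add continuous_id

theorem cone_lemma (k : ℕ) : ∀ {ι : Type*} [DecidableEq ι] (s : Finset ι) (x : ι → ℝ),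
    k ≤ s.card → (∀ j, 1 ≤ j → j ≤ k → 0 < esymmOn s j x) →
    ∀ i ∈ s, ∀ j, j ≤ k - 1 → 0 < esymmOn (s.erase i) j x := by
  induction k with
  | zero =>
    intro ι _ s x _ _ i hi j hj
    interval_cases j
    rw [esymmOn_zero]; norm_num
  | succ k ih =>
    intro ι _ s x hcard hΓ i hi j hj
    rcases Nat.eq_zero_or_pos j with rfl | hj1
    · rw [esymmOn_zero]; norm_num
    rcases Nat.lt_or_ge j k with hjk | hjk
    · exact ih s x (by omega) (fun j h1 h2 => hΓ j h1 (by omega)) i hi j (by omega)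
    have hjeq : j = k := by omega
    rw [hjeq]
    -- now 1 ≤ j = k
    by_contra hcon
    push_neg at hcon
    set φ : ℝ → ℝ := fun t => esymmOn (s.erase i) k fun a => x a + t with hφ
    set T : ℝ := 1 + ∑ a ∈ s, |x a| with hT
    have hT0 : (0:ℝ) ≤ T := by
      rw [hT]
      have : (0:ℝ) ≤ ∑ a ∈ s, |x a| := Finset.sum_nonneg fun a _ => abs_nonneg _
      linarith
    have hφT : 0 < φ T := by
      apply esymmOn_pos
      · intro a ha
        have h1 : |x a| ≤ ∑ b ∈ s, |x b| :=
          Finset.single_le_sum (fun b _ => abs_nonneg (x b)) (Finset.mem_of_mem_erase ha)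
        have h2 : -x a ≤ |x a| := neg_le_abs _
        rw [hT]; linarith
      · rw [Finset.card_erase_of_mem hi]; omega
    have hφ0 : φ 0 ≤ 0 := by
      have : (fun a => x a + (0:ℝ)) = x := by funext a; ring
      rw [hφ]
      simpa [this] using hcon
    obtain ⟨t₀, ht₀mem, ht₀⟩ : ∃ t₀ ∈ Set.Icc (0:ℝ) T, φ t₀ = 0 := by
      have hIVT := intermediate_value_Icc hT0 (esymmOn_continuous (s.erase i) k x).continuousOn
      have : (0:ℝ) ∈ Set.Icc (φ 0) (φ T) := ⟨hφ0, hφT.le⟩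
      obtain ⟨t₀, ht₀, h⟩ := hIVT this
      exact ⟨t₀, ht₀, h⟩
    set y : ι → ℝ := fun a => x a + t₀ with hy
    have hyΓ : ∀ j, 1 ≤ j → j ≤ k + 1 → 0 < esymmOn s j y :=
      fun j h1 h2 => esymmOn_shift_pos s x (k+1) hΓ ht₀mem.1 h1 h2 (by omega)
    have hrec := esymmOn_rec hi k y
    have hky : esymmOn (s.erase i) k y = 0 := ht₀
    have htop : esymmOn (s.erase i) (k + 1) y = esymmOn s (k + 1) y := by
      rw [hrec, hky, mul_zero, add_zero]
    have htoppos : 0 < esymmOn (s.erase i) (k + 1) y := by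
      rw [htop]; exact hyΓ (k+1) (by omega) le_rfl
    rcases Nat.lt_or_ge (s.erase i).card (k + 1) with hsmall | hbig
    · exact absurd (esymmOn_eq_zero hsmall y) (ne_of_gt htoppos)
    · -- apply Newton contradiction with Q = k - 1
      obtain ⟨Q, rfl⟩ : ∃ Q, k = Q + 1 := ⟨k - 1, by omega⟩
      apply newton_contradiction (s.erase i) y Q
      · omega
      · exact ih s y (by omega) (fun j h1 h2 => hyΓ j h1 (by omega)) i hi Q (by omega)
      · exact hky
      · exact htoppos

open Matrix in
lemma charpoly_conj {n : ℕ} (U D V : Matrix (Fin n) (Fin n) ℝ) (hUV : U * V = 1) :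
    (U * D * V).charpoly = D.charpoly := by
  have key : charmatrix (U * D * V) =
      (C : ℝ →+* ℝ[X]).mapMatrix U * charmatrix D * (C : ℝ →+* ℝ[X]).mapMatrix V := by
    rw [charmatrix, charmatrix, Matrix.mul_sub, Matrix.sub_mul]
    congr 1
    · rw [scalar_apply, ← smul_one_eq_diagonal, Matrix.mul_smul, mul_one, Matrix.smul_mul,
        ← _root_.map_mul, hUV, _root_.map_one]
    · rw [_root_.map_mul, _root_.map_mul]
  rw [Matrix.charpoly, Matrix.charpoly, key, Matrix.det_mul, Matrix.det_mul]
  have hdet : ((C : ℝ →+* ℝ[X]).mapMatrix U).det * ((C : ℝ →+* ℝ[X]).mapMatrix V).det = 1 := by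
    rw [← Matrix.det_mul, ← _root_.map_mul, hUV, _root_.map_one, Matrix.det_one]
  rw [mul_right_comm, hdet, one_mul]

open Matrix in
lemma charpoly_diag {n : ℕ} (d : Fin n → ℝ) :
    (diagonal d).charpoly = ∏ i, (X - C (d i)) := by
  rw [Matrix.charpoly_of_upperTriangular _ (Matrix.blockTriangular_diagonal d)]
  apply Finset.prod_congr rfl
  intro i _
  rw [Matrix.diagonal_apply_eq]


end Aux

attribute [local instance] Matrix.normedAddCommGroup Matrix.normedSpace

lemma esymm_eq_esymmOn (n j : ℕ) (x : Fin n → ℝ) :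
    esymm n j x = esymmOn Finset.univ j x := rfl

open Matrix in
theorem stmt_2 (n k : ℕ) (hk : 1 ≤ k) (hkn : k ≤ n)
    (A : Matrix (Fin n) (Fin n) ℝ) (hA : A.IsHermitian)
    (heig : ∀ j : ℕ, 1 ≤ j → j ≤ k → 0 < esymm n j hA.eigenvalues) :
    (newtonT n (k - 1) A).PosDef := by
  classical
  set U : Matrix (Fin n) (Fin n) ℝ := (hA.eigenvectorUnitary : Matrix (Fin n) (Fin n) ℝ)
    with hUdef
  set ev : Fin n → ℝ := hA.eigenvalues with hev
  have hUV : U * star U = 1 := Matrix.mem_unitaryGroup_iff.mp hA.eigenvectorUnitary.2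
  have hVU : star U * U = 1 := Matrix.mem_unitaryGroup_iff'.mp hA.eigenvectorUnitary.2
  have hspec : A = U * diagonal ev * star U := by
    have h := hA.spectral_theorem
    have h2 : RCLike.ofReal ∘ hA.eigenvalues = hA.eigenvalues := by
      funext a
      simp [RCLike.ofReal_real_eq_id]
    rwa [h2] at h
  have hcharpoly : A.charpoly = ∏ i, (X - C (ev i)) := by
    conv_lhs => rw [hspec]
    rw [charpoly_conj U (diagonal ev) (star U) hUV, charpoly_diag]
  have hcardu : (Finset.univ : Finset (Fin n)).card = n := by
    simp
  have hsigma : ∀ j, j ≤ n → sigmaMat n j A = esymmOn Finset.univ j ev := by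
    intro j hj
    rw [sigmaMat, hcharpoly]
    have hprod : (∏ i, (X - C (ev i))) = ∏ i, (X + C (-ev i)) := by
      apply Finset.prod_congr rfl
      intro i _
      rw [map_neg, ← sub_eq_add_neg]
    rw [hprod]
    have hcoeff := coeff_prod_X_add_C (Finset.univ : Finset (Fin n)) (fun i => -ev i)
      (j := j) (by rw [hcardu]; exact hj)
    rw [hcardu] at hcoeff
    rw [hcoeff]
    have hneg : esymmOn Finset.univ j (fun i => -ev i)
        = (-1 : ℝ) ^ j * esymmOn Finset.univ j ev := by
      rw [esymmOn, esymmOn, Finset.mul_sum]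
      apply Finset.sum_congr rfl
      intro t ht
      rw [Finset.mem_powersetCard] at ht
      have : ∀ i ∈ t, -ev i = (-1 : ℝ) * ev i := fun i _ => by ring
      rw [Finset.prod_congr rfl this, Finset.prod_mul_distrib, Finset.prod_const, ht.2]
    rw [hneg, ← mul_assoc, ← pow_add]
    have : Even (j + j) := ⟨j, rfl⟩
    rw [this.neg_one_pow, one_mul]
  have hpow : ∀ j : ℕ, (U * diagonal ev * star U) ^ j
      = U * diagonal (fun i => ev i ^ j) * star U := by
    intro j
    induction j with
    | zero =>
      simp only [pow_zero]
      rw [diagonal_one, mul_one, hUV]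
    | succ j ih =>
      rw [pow_succ, ih]
      have hcancel : ∀ Z : Matrix (Fin n) (Fin n) ℝ, star U * (U * Z) = Z := by
        intro Z
        rw [← Matrix.mul_assoc, hVU, Matrix.one_mul]
      calc U * diagonal (fun i => ev i ^ j) * star U * (U * diagonal ev * star U)
          = U * (diagonal (fun i => ev i ^ j) * (star U * (U * (diagonal ev * star U)))) := by
            simp only [Matrix.mul_assoc]
        _ = U * (diagonal (fun i => ev i ^ j) * (diagonal ev * star U)) := by rw [hcancel]
        _ = U * (diagonal (fun i => ev i ^ j) * diagonal ev) * star U := by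
            simp only [Matrix.mul_assoc]
        _ = U * diagonal (fun i => ev i ^ (j + 1)) * star U := by
            rw [Matrix.diagonal_mul_diagonal]
            have hfe : (fun i => ev i ^ j * ev i) = fun i : Fin n => ev i ^ (j + 1) := by
              funext i
              rw [pow_succ]
            rw [hfe]
  set w : Fin n → ℝ := fun i =>
    ∑ j ∈ Finset.range ((k - 1) + 1), ((-1 : ℝ) ^ j * sigmaMat n (k - 1 - j) A) * ev i ^ j
    with hw
  have hnewton : newtonT n (k - 1) A = U * diagonal w * star U := by
    rw [newtonT]
    have hterm : ∀ j ∈ Finset.range ((k - 1) + 1),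
        ((-1 : ℝ) ^ j * sigmaMat n (k - 1 - j) A) • A ^ j
        = U * diagonal (fun i => ((-1 : ℝ) ^ j * sigmaMat n (k - 1 - j) A) * ev i ^ j)
            * star U := by
      intro j _
      set c : ℝ := (-1 : ℝ) ^ j * sigmaMat n (k - 1 - j) A with hc
      rw [hspec, hpow j]
      have hfe : c • (fun i => ev i ^ j) = fun i => c * ev i ^ j := by
        funext i
        simp [smul_eq_mul]
      conv_rhs => rw [← hfe, Matrix.diagonal_smul, Matrix.mul_smul, Matrix.smul_mul]
    rw [Finset.sum_congr rfl hterm, ← Finset.sum_mul, ← Finset.mul_sum]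
    congr 2
    have := map_sum (Matrix.diagonalAddMonoidHom (Fin n) ℝ)
      (fun j => (fun i => ((-1 : ℝ) ^ j * sigmaMat n (k - 1 - j) A) * ev i ^ j))
      (Finset.range ((k - 1) + 1))
    simp only [Matrix.diagonalAddMonoidHom_apply] at this
    rw [← this]
    have hfun : (∑ x ∈ Finset.range ((k - 1) + 1),
        fun i => ((-1 : ℝ)) ^ x * sigmaMat n (k - 1 - x) A * ev i ^ x) = w := by
      funext i
      simp [hw, Finset.sum_apply]
    rw [hfun]
  have heig' : ∀ j, 1 ≤ j → j ≤ k → 0 < esymmOn Finset.univ j ev := by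
    intro j h1 h2
    rw [← esymm_eq_esymmOn]
    exact heig j h1 h2
  have hwpos : ∀ i, 0 < w i := by
    intro i
    have halt := esymmOn_alt (Finset.mem_univ i) (k - 1) ev
    have hweq : w i = ∑ j ∈ Finset.range ((k - 1) + 1),
        (-1 : ℝ) ^ j * esymmOn Finset.univ ((k - 1) - j) ev * ev i ^ j := by
      rw [hw]
      apply Finset.sum_congr rfl
      intro j _
      rw [hsigma ((k - 1) - j) (by omega)]
    rw [hweq, halt]
    exact cone_lemma k Finset.univ ev (by rw [hcardu]; exact hkn) heig' i
      (Finset.mem_univ i) (k - 1) le_rfl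
  rw [hnewton]
  rw [Matrix.posDef_iff_dotProduct_mulVec]
  constructor
  · rw [Matrix.star_eq_conjTranspose]
    exact Matrix.isHermitian_mul_mul_conjTranspose U (Matrix.isHermitian_diagonal w)
  · intro x hx
    set y : Fin n → ℝ := star U *ᵥ x with hy
    have hxy : x = U *ᵥ y := by
      rw [hy, Matrix.mulVec_mulVec, hUV, Matrix.one_mulVec]
    have hyne : y ≠ 0 := by
      intro h
      apply hx
      rw [hxy, h, Matrix.mulVec_zero]
    have hq : star x ⬝ᵥ ((U * diagonal w * star U) *ᵥ x) = star y ⬝ᵥ (diagonal w *ᵥ y) := by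
      rw [← Matrix.mulVec_mulVec, ← Matrix.mulVec_mulVec,
        Matrix.dotProduct_mulVec (star x) U _]
      congr 1
      rw [hy, Matrix.star_mulVec, Matrix.star_eq_conjTranspose,
        Matrix.conjTranspose_conjTranspose]
    rw [hq]
    exact (Matrix.posDef_diagonal_iff.mpr hwpos).dotProduct_mulVec_pos hyne
end

section
/- The function λ ↦ log σ_k(λ) is concave on the cone Γ_k^+. -/
open Finset

/-- σ_{k}(λ with i-th coordinate deleted) -/
noncomputable def esymmDel (n k : ℕ) (x : Fin n → ℝ) (i : Fin n) : ℝ :=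
  ∑ s ∈ ((Finset.univ : Finset (Fin n)).erase i).powersetCard k, ∏ j ∈ s, x j

def GammaPlus (n k : ℕ) : Set (Fin n → ℝ) :=
  {x | ∀ j : ℕ, 1 ≤ j → j ≤ k → 0 < esymm n j x}

namespace GammaAux

open Polynomial

variable {n : ℕ}

noncomputable def Es (A : Finset (Fin n)) (k : ℕ) (x : Fin n → ℝ) : ℝ :=
  ∑ s ∈ A.powersetCard k, ∏ i ∈ s, x i

lemma Es_zero (A : Finset (Fin n)) (x : Fin n → ℝ) : Es A 0 x = 1 := by
  simp [Es]

lemma Es_eq_zero {A : Finset (Fin n)} {k : ℕ} (h : A.card < k) (x : Fin n → ℝ) :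
    Es A k x = 0 := by
  simp [Es, powersetCard_eq_empty.2 h]

lemma Es_one (A : Finset (Fin n)) (x : Fin n → ℝ) : Es A 1 x = ∑ i ∈ A, x i := by
  simp [Es, powersetCard_one, Finset.sum_map]

lemma Es_eq_esymm (A : Finset (Fin n)) (k : ℕ) (x : Fin n → ℝ) :
    Es A k x = (A.val.map x).esymm k := by
  rw [Finset.esymm_map_val]; rfl

lemma esymm_cons (a : ℝ) (s : Multiset ℝ) (k : ℕ) :
    (a ::ₘ s).esymm (k+1) = a * s.esymm k + s.esymm (k+1) := by
  rw [Multiset.esymm, Multiset.powersetCard_cons, Multiset.map_add, Multiset.sum_add,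
    Multiset.map_map]
  rw [Multiset.esymm, Multiset.esymm]
  have : ((s.powersetCard k).map (Multiset.prod ∘ (Multiset.cons a))).sum
      = a * ((s.powersetCard k).map Multiset.prod).sum := by
    rw [← Multiset.sum_map_mul_left]
    exact congrArg _ (Multiset.map_congr rfl fun t _ => by simp [Multiset.prod_cons])
  rw [this, add_comm]

lemma Es_erase {A : Finset (Fin n)} {i : Fin n} (hi : i ∈ A) (k : ℕ) (x : Fin n → ℝ) :
    Es A (k+1) x = x i * Es (A.erase i) k x + Es (A.erase i) (k+1) x := by
  rw [Es_eq_esymm, Es_eq_esymm, Es_eq_esymm]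
  have h1 : (A.erase i).val = A.val.erase i := by rw [Finset.erase_val]
  have h2 : A.val.map x = x i ::ₘ (A.val.erase i).map x := by
    rw [← Multiset.map_cons, Multiset.cons_erase (by exact_mod_cast hi)]
  rw [h1, h2, esymm_cons]

noncomputable def pol (A : Finset (Fin n)) (x : Fin n → ℝ) : ℝ[X] :=
  ∏ i ∈ A, (X + C (x i))

lemma pol_monic (A : Finset (Fin n)) (x : Fin n → ℝ) : (pol A x).Monic :=
  monic_prod_of_monic _ _ fun i _ => monic_X_add_C (x i)

lemma pol_natDegree (A : Finset (Fin n)) (x : Fin n → ℝ) :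
    (pol A x).natDegree = A.card := by
  rw [pol, natDegree_prod]
  · simp [natDegree_X_add_C]
  · intro i _; exact X_add_C_ne_zero (x i)

lemma pol_coeff (A : Finset (Fin n)) {k : ℕ} (hk : k ≤ A.card) (x : Fin n → ℝ) :
    (pol A x).coeff (A.card - k) = Es A k x := by
  rw [pol, Finset.prod_X_add_C_coeff _ _ (Nat.sub_le _ _), Nat.sub_sub_self hk]; rfl

lemma pol_splits (A : Finset (Fin n)) (x : Fin n → ℝ) :
    (pol A x).Splits :=
  Splits.prod fun i _ => Splits.of_natDegree_le_one (natDegree_X_add_C (x i)).le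

lemma pol_coeff_eq_zero (A : Finset (Fin n)) (x : Fin n → ℝ) {d : ℕ} (hd : A.card < d) :
    (pol A x).coeff d = 0 :=
  coeff_eq_zero_of_natDegree_lt (by rwa [pol_natDegree])

lemma derivative_pol (A : Finset (Fin n)) (x : Fin n → ℝ) :
    derivative (pol A x) = ∑ i ∈ A, pol (A.erase i) x := by
  show derivative (A.val.map fun i => X + C (x i)).prod
      = (A.val.map fun i => pol (A.erase i) x).sum
  rw [derivative_prod]
  refine congrArg Multiset.sum (Multiset.map_congr rfl fun i hi => ?_)
  have : pol (A.erase i) x = ((A.val.erase i).map fun j => X + C (x j)).prod := by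
    rw [pol, ← Finset.erase_val]; rfl
  simp [this]

/-- C5 : ∑_i E_j(A−i) = (|A|−j) E_j(A) -/
lemma sum_Es_erase (A : Finset (Fin n)) {j : ℕ} (hj : j + 1 ≤ A.card) (x : Fin n → ℝ) :
    ∑ i ∈ A, Es (A.erase i) j x = ((A.card - j : ℕ) : ℝ) * Es A j x := by
  have hcard : ∀ i ∈ A, (A.erase i).card = A.card - 1 := fun i hi => Finset.card_erase_of_mem hi
  have h1 : ∀ i ∈ A, Es (A.erase i) j x = (pol (A.erase i) x).coeff (A.card - 1 - j) := by
    intro i hi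
    rw [← pol_coeff (A.erase i) (k := j) (by rw [hcard i hi]; omega) x, hcard i hi]
  rw [Finset.sum_congr rfl h1, ← finset_sum_coeff, ← derivative_pol, coeff_derivative]
  have h2 : A.card - 1 - j + 1 = A.card - j := by omega
  rw [h2, pol_coeff A (by omega) x]
  have h3 : ((A.card - 1 - j : ℕ) : ℝ) + 1 = ((A.card - j : ℕ) : ℝ) := by
    rw [← h2]; push_cast; ring
  rw [h3, mul_comm]



/-- Euler identity: ∑_i x_i E_k(A−i) = (k+1) E_{k+1}(A). -/
lemma euler (A : Finset (Fin n)) (k : ℕ) (x : Fin n → ℝ) :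
    ∑ i ∈ A, x i * Es (A.erase i) k x = ((k+1 : ℕ) : ℝ) * Es A (k+1) x := by
  have key : ∀ i ∈ A, x i * Es (A.erase i) k x
      = Es A (k+1) x - Es (A.erase i) (k+1) x := by
    intro i hi; rw [Es_erase hi]; ring
  rw [Finset.sum_congr rfl key, Finset.sum_sub_distrib, Finset.sum_const, nsmul_eq_mul]
  rcases le_or_gt (k+2) A.card with h | h
  · rw [sum_Es_erase A (by omega) x]
    have h1 : ((A.card - (k+1) : ℕ) : ℝ) = (A.card : ℝ) - (k+1 : ℕ) := by
      push_cast [Nat.cast_sub (by omega : k + 1 ≤ A.card)]; ring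
    rw [h1]; push_cast; ring
  · rcases le_or_gt (k+1) A.card with h2 | h2
    · -- k+1 = A.card
      have hc : A.card = k+1 := by omega
      have hz : ∀ i ∈ A, Es (A.erase i) (k+1) x = 0 := fun i hi =>
        Es_eq_zero (by rw [Finset.card_erase_of_mem hi]; omega) x
      rw [Finset.sum_congr rfl hz, Finset.sum_const_zero, sub_zero, hc]
    · have hz : Es A (k+1) x = 0 := Es_eq_zero h2 x
      have hz2 : ∀ i ∈ A, Es (A.erase i) (k+1) x = 0 := fun i hi =>
        Es_eq_zero (by rw [Finset.card_erase_of_mem hi]; omega) x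
      rw [Finset.sum_congr rfl hz2, Finset.sum_const_zero, sub_zero, hz, mul_zero, mul_zero]

lemma Es_smul (A : Finset (Fin n)) (k : ℕ) (c : ℝ) (x : Fin n → ℝ) :
    Es A k (fun i => c * x i) = c ^ k * Es A k x := by
  rw [Es, Es, Finset.mul_sum]
  refine Finset.sum_congr rfl fun t ht => ?_
  rw [Finset.prod_mul_distrib, Finset.prod_const, (Finset.mem_powersetCard.1 ht).2]

lemma pol_shift (A : Finset (Fin n)) (x : Fin n → ℝ) (s : ℝ) :
    pol A (fun i => x i + s) = (taylor s (pol A x) : ℝ[X]) := by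
  rw [taylor_apply, pol, pol, Polynomial.prod_comp]
  refine Finset.prod_congr rfl fun i _ => ?_
  rw [add_comp, X_comp, C_comp, map_add]
  ring

lemma Es_shift (A : Finset (Fin n)) {j : ℕ} (hj : j ≤ A.card) (x : Fin n → ℝ) (s : ℝ) :
    Es A j (fun i => x i + s) = (hasseDeriv (A.card - j) (pol A x)).eval s := by
  rw [← pol_coeff A hj (fun i => x i + s), pol_shift, taylor_coeff]


def GF (A : Finset (Fin n)) (k : ℕ) (x : Fin n → ℝ) : Prop :=
  ∀ j, 1 ≤ j → j ≤ k → 0 < Es A j x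

lemma hasseDeriv_pol_natDegree_le (A : Finset (Fin n)) (x : Fin n → ℝ) {j : ℕ}
    (hj : j ≤ A.card) : (hasseDeriv (A.card - j) (pol A x)).natDegree ≤ j := by
  refine natDegree_le_iff_coeff_eq_zero.2 fun d hd => ?_
  rw [hasseDeriv_coeff, pol_coeff_eq_zero A x (by omega), mul_zero]

lemma Es_shift_pos {A : Finset (Fin n)} {k : ℕ} {x : Fin n → ℝ} (hx : GF A k x)
    (hkA : k ≤ A.card) {j : ℕ} (hj1 : 1 ≤ j) (hjk : j ≤ k) {s : ℝ} (hs : 0 ≤ s) :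
    0 < Es A j (fun i => x i + s) := by
  have hjA : j ≤ A.card := le_trans hjk hkA
  rw [Es_shift A hjA]
  rw [Polynomial.eval_eq_sum_range'
    (lt_of_le_of_lt (hasseDeriv_pol_natDegree_le A x hjA) (Nat.lt_succ_self j))]
  have hco : ∀ d, d ≤ j → (pol A x).coeff (d + (A.card - j)) = Es A (j - d) x := by
    intro d hd
    have h : d + (A.card - j) = A.card - (j - d) := by omega
    rw [h, pol_coeff A (by omega) x]
  refine Finset.sum_pos' (fun d hd => ?_) ⟨0, Finset.mem_range.2 (by omega), ?_⟩
  · have hd' : d ≤ j := by have := Finset.mem_range.1 hd; omega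
    rw [hasseDeriv_coeff, hco d hd']
    have hEs : 0 ≤ Es A (j - d) x := by
      rcases Nat.eq_or_lt_of_le hd' with h | h
      · simp [h, Es_zero]
      · exact (hx (j - d) (by omega) (by omega)).le
    have := pow_nonneg hs d
    positivity
  · rw [hasseDeriv_coeff, hco 0 (by omega)]
    simp only [Nat.zero_add, Nat.choose_self, Nat.cast_one, one_mul, Nat.sub_zero, pow_zero,
      mul_one, zero_add]
    exact hx j hj1 hjk

lemma splits_derivative {p : ℝ[X]} (hp : p.Splits) :
    (derivative p).Splits := by
  by_cases h0 : derivative p = 0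
  · rw [h0]; exact Splits.zero
  have hd0 : p.natDegree ≠ 0 := fun h => h0 (derivative_of_natDegree_zero h)
  have h1 : Multiset.card p.roots = p.natDegree := splits_iff_card_roots.1 hp
  have h2 := p.card_roots_le_derivative
  have h3 : (derivative p).natDegree ≤ p.natDegree - 1 := natDegree_derivative_le p
  have h4 := (derivative p).card_roots'
  refine splits_iff_card_roots.2 (le_antisymm h4 ?_)
  omega

lemma splits_iterate_derivative {p : ℝ[X]} (hp : p.Splits) (k : ℕ) :
    (derivative^[k] p).Splits := by
  induction k with
  | zero => exact hp
  | succ m ih => rw [Function.iterate_succ_apply']; exact splits_derivative ih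



lemma esymm_zero' (s : Multiset ℝ) : s.esymm 0 = 1 := by
  simp [Multiset.esymm, Multiset.powersetCard_zero_left]

lemma descF_pos {a b : ℕ} (h : b ≤ a) : 0 < a.descFactorial b :=
  Nat.pos_of_ne_zero fun h0 =>
    absurd (Nat.descFactorial_eq_zero_iff_lt.1 h0) (not_lt.2 h)

lemma natDegree_one_sub_C_mul_X_le (ρ : ℝ) : ((1 : ℝ[X]) - C ρ * X).natDegree ≤ 1 := by
  have h : (1 : ℝ[X]) - C ρ * X = C (-ρ) * X + C 1 := by
    rw [map_neg, C_1]; ring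
  rw [h]; exact natDegree_linear_le

/-- coefficients of the "reversed" split polynomial ∏ (1 - ρ X). -/
lemma rev_prod_coeff (R : Multiset ℝ) (d : ℕ) :
    ((R.map fun ρ => 1 - C ρ * X).prod).coeff d = (-1) ^ d * R.esymm d := by
  induction R using Multiset.induction_on generalizing d with
  | empty =>
    cases d with
    | zero => simp [esymm_zero']
    | succ m =>
      simp [Multiset.esymm, Multiset.powersetCard_zero_right, coeff_one, Nat.succ_ne_zero]
  | cons a s ih =>
    rw [Multiset.map_cons, Multiset.prod_cons]
    have expand : ∀ d : ℕ, ((1 - C a * X) * (s.map fun ρ => 1 - C ρ * X).prod).coeff d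
        = ((s.map fun ρ => 1 - C ρ * X).prod).coeff d
          - a * (X * (s.map fun ρ => 1 - C ρ * X).prod).coeff d := by
      intro d
      rw [sub_mul, coeff_sub, one_mul, mul_assoc, coeff_C_mul]
    cases d with
    | zero =>
      rw [expand 0, mul_coeff_zero, coeff_X_zero, zero_mul, mul_zero, sub_zero, ih 0,
        esymm_zero', esymm_zero']
    | succ m =>
      rw [expand (m+1), coeff_X_mul, ih (m+1), ih m, esymm_cons]
      ring

lemma splits_multiset_prod' (R : Multiset ℝ[X]) (h : ∀ q ∈ R, q.Splits) :
    R.prod.Splits := by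
  induction R using Multiset.induction_on with
  | empty => simpa using Splits.one
  | cons a s ih =>
    rw [Multiset.prod_cons]
    exact Splits.mul (h a (Multiset.mem_cons_self a s))
      (ih fun q hq => h q (Multiset.mem_cons_of_mem hq))

/-- Newton-type inequality: if the middle elementary symmetric function vanishes,
the product of its neighbours is ≤ 0. -/
lemma newton_aux (B : Finset (Fin n)) (x : Fin n → ℝ) {j : ℕ} (hj : 1 ≤ j)
    (hmid : Es B j x = 0) : Es B (j+1) x * Es B (j-1) x ≤ 0 := by
  rcases lt_or_ge B.card (j+1) with hcard | hcard
  · rw [Es_eq_zero hcard, zero_mul]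
  by_cases htop : Es B (j+1) x = 0
  · rw [htop, zero_mul]
  set m := B.card with hm
  set p := pol B x with hp
  set q₁ := derivative^[m - j - 1] p with hq₁
  have hq₁splits : q₁.Splits := splits_iterate_derivative (pol_splits B x) _
  have hq₁coeff : ∀ e : ℕ, q₁.coeff e
      = ((e + (m - j - 1)).descFactorial (m - j - 1) : ℝ) * p.coeff (e + (m - j - 1)) := by
    intro e
    rw [hq₁, coeff_iterate_derivative, nsmul_eq_mul]
  have hpdeg : p.natDegree = m := pol_natDegree B x
  have hq₁top_ne : q₁.coeff (j+1) ≠ 0 := by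
    rw [hq₁coeff]
    have h1 : j + 1 + (m - j - 1) = m := by omega
    rw [h1]
    have h2 : p.coeff m = 1 := by
      have h3 := (pol_monic B x).leadingCoeff
      rwa [leadingCoeff, hpdeg] at h3
    rw [h2, mul_one]
    exact_mod_cast (descF_pos (by omega : m - j - 1 ≤ m)).ne'
  have hq₁deg : q₁.natDegree = j + 1 := by
    refine le_antisymm ?_ (le_natDegree_of_ne_zero hq₁top_ne)
    calc q₁.natDegree ≤ p.natDegree - (m - j - 1) := natDegree_iterate_derivative p _
    _ = j + 1 := by omega
  have hq₁roots : Multiset.card q₁.roots = j + 1 := by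
    rw [splits_iff_card_roots.1 hq₁splits, hq₁deg]
  -- reversed polynomial
  set w := C q₁.leadingCoeff * ((q₁.roots.map fun ρ => 1 - C ρ * X).prod) with hw
  have hwsplits : w.Splits := by
    refine Splits.mul (Splits.C _) (splits_multiset_prod' _ fun q hq => ?_)
    obtain ⟨ρ, _, rfl⟩ := Multiset.mem_map.1 hq
    exact Splits.of_natDegree_le_one (natDegree_one_sub_C_mul_X_le ρ)
  have hwcoeff : ∀ d : ℕ, d ≤ j + 1 → w.coeff d = q₁.coeff (j + 1 - d) := by
    intro d hd
    have h1 : q₁ = C q₁.leadingCoeff * (q₁.roots.map fun a => X - C a).prod :=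
      hq₁splits.eq_prod_roots
    have h2 : q₁.coeff (j + 1 - d)
        = q₁.leadingCoeff * ((-1) ^ d * q₁.roots.esymm d) := by
      conv_lhs => rw [h1]
      rw [coeff_C_mul, Multiset.prod_X_sub_C_coeff q₁.roots (by rw [hq₁roots]; omega)]
      rw [hq₁roots]
      have h3 : j + 1 - (j + 1 - d) = d := by omega
      rw [h3]
    rw [h2, hw, coeff_C_mul, rev_prod_coeff]
  have hwdeg : w.natDegree ≤ j + 1 := by
    refine (natDegree_mul_le).trans ?_
    rw [natDegree_C, zero_add]
    refine (natDegree_multiset_prod_le _).trans ?_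
    have h1 : ∀ y ∈ (q₁.roots.map fun ρ => 1 - C ρ * X).map natDegree, y ≤ 1 := by
      intro y hy
      obtain ⟨q, hq, rfl⟩ := Multiset.mem_map.1 hy
      obtain ⟨ρ, _, rfl⟩ := Multiset.mem_map.1 hq
      exact natDegree_one_sub_C_mul_X_le ρ
    calc ((q₁.roots.map fun ρ => 1 - C ρ * X).map natDegree).sum
        ≤ Multiset.card ((q₁.roots.map fun ρ => 1 - C ρ * X).map natDegree) * 1 :=
          Multiset.sum_le_card_nsmul _ 1 h1
    _ = j + 1 := by simp [hq₁roots]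
  -- second round of derivatives
  set q₂ := derivative^[j-1] w with hq₂
  have hq₂splits : q₂.Splits := splits_iterate_derivative hwsplits _
  have hq₂coeff : ∀ e : ℕ, q₂.coeff e
      = ((e + (j - 1)).descFactorial (j - 1) : ℝ) * w.coeff (e + (j - 1)) := by
    intro e
    rw [hq₂, coeff_iterate_derivative, nsmul_eq_mul]
  have hpcoeff : ∀ l : ℕ, l ≤ m → p.coeff (m - l) = Es B l x := fun l hl => pol_coeff B hl x
  -- coefficient 1 vanishes
  have hc1 : q₂.coeff 1 = 0 := by
    rw [hq₂coeff, hwcoeff (1 + (j - 1)) (by omega)]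
    have e1 : j + 1 - (1 + (j - 1)) = 1 := by omega
    rw [e1, hq₁coeff]
    have e2 : 1 + (m - j - 1) = m - j := by omega
    rw [e2, hpcoeff j (by omega), hmid, mul_zero, mul_zero]
  -- coefficient 0
  have hc0 : q₂.coeff 0 = ((0 + (j - 1)).descFactorial (j - 1) : ℝ)
      * (((2 + (m - j - 1)).descFactorial (m - j - 1) : ℝ) * Es B (j-1) x) := by
    rw [hq₂coeff, hwcoeff (0 + (j - 1)) (by omega)]
    have e1 : j + 1 - (0 + (j - 1)) = 2 := by omega
    rw [e1, hq₁coeff]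
    congr 2
    have e2 : 2 + (m - j - 1) = m - (j - 1) := by omega
    rw [e2, hpcoeff (j - 1) (by omega)]
  -- coefficient 2
  have hc2 : q₂.coeff 2 = ((2 + (j - 1)).descFactorial (j - 1) : ℝ)
      * (((0 + (m - j - 1)).descFactorial (m - j - 1) : ℝ) * Es B (j+1) x) := by
    rw [hq₂coeff, hwcoeff (2 + (j - 1)) (by omega)]
    have e1 : j + 1 - (2 + (j - 1)) = 0 := by omega
    rw [e1, hq₁coeff]
    congr 2
    have e2 : 0 + (m - j - 1) = m - (j + 1) := by omega
    rw [e2, hpcoeff (j + 1) (by omega)]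
  set a₀ : ℝ := ((0 + (j - 1)).descFactorial (j - 1) : ℝ)
      * ((2 + (m - j - 1)).descFactorial (m - j - 1) : ℝ) with ha₀
  set a₂ : ℝ := ((2 + (j - 1)).descFactorial (j - 1) : ℝ)
      * ((0 + (m - j - 1)).descFactorial (m - j - 1) : ℝ) with ha₂
  have ha₀pos : 0 < a₀ := by
    have p1 := descF_pos (by omega : j - 1 ≤ 0 + (j-1))
    have p2 := descF_pos (by omega : m - j - 1 ≤ 2 + (m-j-1))
    rw [ha₀]; positivity
  have ha₂pos : 0 < a₂ := by
    have p1 := descF_pos (by omega : j - 1 ≤ 2 + (j-1))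
    have p2 := descF_pos (by omega : m - j - 1 ≤ 0 + (m-j-1))
    rw [ha₂]; positivity
  have hc0' : q₂.coeff 0 = a₀ * Es B (j-1) x := by rw [hc0, ha₀, mul_assoc]
  have hc2' : q₂.coeff 2 = a₂ * Es B (j+1) x := by rw [hc2, ha₂, mul_assoc]
  have hq₂deg : q₂.natDegree ≤ 2 := by
    have h1 : q₂.natDegree ≤ w.natDegree - (j - 1) := natDegree_iterate_derivative w (j - 1)
    omega
  have hc2ne : q₂.coeff 2 ≠ 0 := by rw [hc2']; exact mul_ne_zero ha₂pos.ne' htop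
  have hq₂degeq : q₂.natDegree = 2 := le_antisymm hq₂deg (le_natDegree_of_ne_zero hc2ne)
  have hq₂rootscard : Multiset.card q₂.roots = 2 := by
    rw [splits_iff_card_roots.1 hq₂splits, hq₂degeq]
  have hroots_ne : q₂.roots ≠ 0 := by
    intro h
    rw [h] at hq₂rootscard
    simp at hq₂rootscard
  obtain ⟨r, hr⟩ := Multiset.exists_mem_of_ne_zero hroots_ne
  have heval : q₂.eval r = 0 := isRoot_of_mem_roots hr
  have hsum : q₂.eval r = q₂.coeff 0 + q₂.coeff 1 * r + q₂.coeff 2 * r^2 := by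
    rw [eval_eq_sum_range' (show q₂.natDegree < 3 by omega)]
    rw [Finset.sum_range_succ, Finset.sum_range_succ, Finset.sum_range_succ,
      Finset.sum_range_zero]
    ring
  rw [hsum, hc1, hc0', hc2'] at heval
  have key : a₀ * (Es B (j+1) x * Es B (j-1) x) = -(a₂ * (Es B (j+1) x * r)^2) := by
    linear_combination (Es B (j+1) x) * heval
  nlinarith [sq_nonneg (Es B (j+1) x * r), ha₀pos, ha₂pos,
    mul_nonneg ha₂pos.le (sq_nonneg (Es B (j+1) x * r))]

/-- Deleted positivity: if x ∈ Γ_k(A) then the deleted tuples are in Γ_{k-1}. -/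
lemma deleted_pos : ∀ k : ℕ, ∀ A : Finset (Fin n), ∀ x : Fin n → ℝ, k ≤ A.card →
    GF A k x → ∀ i ∈ A, ∀ j, 1 ≤ j → j + 1 ≤ k → 0 < Es (A.erase i) j x := by
  intro k
  induction k with
  | zero => intro A x _ _ i hi j hj1 hj2; omega
  | succ k ih =>
    intro A x hcard hx i hi j hj1 hj2
    rcases lt_or_ge (j+1) (k+1) with hjk | hjk
    · exact ih A x (by omega) (fun l h1 h2 => hx l h1 (by omega)) i hi j hj1 (by omega)
    have hjeq : j = k := by omega
    subst hjeq
    -- main case: show 0 < Es (A.erase i) j x with j = k, k ≥ 1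
    by_contra hneg
    push_neg at hneg
    set B := A.erase i with hB
    have hBcard : B.card = A.card - 1 := Finset.card_erase_of_mem hi
    have hkB : j ≤ B.card := by omega
    set Q := hasseDeriv (B.card - j) (pol B x) with hQ
    have hQeval : ∀ s : ℝ, Es B j (fun t => x t + s) = Q.eval s := fun s => Es_shift B hkB x s
    have hQ0 : Q.eval 0 ≤ 0 := by
      rw [← hQeval 0]
      have : (fun t => x t + (0:ℝ)) = x := by funext t; ring
      rwa [this]
    -- leading coefficient
    have hQtop : Q.coeff j = ((B.card.choose (B.card - j) : ℕ) : ℝ) := by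
      rw [hQ, hasseDeriv_coeff]
      have h1 : j + (B.card - j) = B.card := by omega
      rw [h1]
      have h2 : (pol B x).coeff B.card = 1 := by
        have h3 := (pol_monic B x).leadingCoeff
        rwa [leadingCoeff, pol_natDegree] at h3
      rw [h2, mul_one]
    have hQtopne : Q.coeff j ≠ 0 := by
      rw [hQtop]
      have h4 : 0 < B.card.choose (B.card - j) := Nat.choose_pos (by omega)
      exact_mod_cast h4.ne'
    have hQdeg : Q.natDegree = j := le_antisymm (hasseDeriv_pol_natDegree_le B x hkB)
      (le_natDegree_of_ne_zero hQtopne)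
    have hQlc : 0 ≤ Q.leadingCoeff := by
      rw [leadingCoeff, hQdeg, hQtop]
      positivity
    have hQdegpos : 0 < Q.degree :=
      natDegree_pos_iff_degree_pos.mp (by omega)
    have htends : Filter.Tendsto (fun s => Q.eval s) Filter.atTop Filter.atTop :=
      Q.tendsto_atTop_of_leadingCoeff_nonneg hQdegpos hQlc
    obtain ⟨T, hT⟩ := Filter.eventually_atTop.1 (htends.eventually_ge_atTop 1)
    set T₁ : ℝ := max T 0 + 1 with hT₁
    have hT₁pos : (0:ℝ) ≤ T₁ := by
      have := le_max_right T (0:ℝ); simp only [hT₁]; linarith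
    have hT₁val : 1 ≤ Q.eval T₁ := hT (max T 0 + 1) (by have := le_max_left T (0:ℝ); linarith)
    have hcont : ContinuousOn (fun s => Q.eval s) (Set.Icc 0 T₁) :=
      (Polynomial.continuous Q).continuousOn
    have hmem : (0:ℝ) ∈ Set.Icc (Q.eval 0) (Q.eval T₁) := ⟨hQ0, by linarith⟩
    obtain ⟨s₀, hs₀mem, hs₀⟩ := intermediate_value_Icc hT₁pos hcont hmem
    have hs₀nonneg : 0 ≤ s₀ := hs₀mem.1
    set μ : Fin n → ℝ := fun t => x t + s₀ with hμ
    have hμΓ : GF A (j+1) μ := fun l h1 h2 => Es_shift_pos hx hcard h1 h2 hs₀nonneg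
    have hEk : Es B j μ = 0 := by rw [hμ, hQeval s₀]; exact hs₀
    have hEkp1 : 0 < Es B (j+1) μ := by
      have h5 : Es A (j+1) μ = μ i * Es B j μ + Es B (j+1) μ := Es_erase hi j μ
      rw [hEk, mul_zero, zero_add] at h5
      rw [← h5]
      exact hμΓ (j+1) (by omega) (by omega)
    have hEkm1 : 0 < Es B (j-1) μ := by
      rcases Nat.eq_or_lt_of_le hj1 with h6 | h6
      · rw [← h6]
        simp [Es_zero]
      · exact ih A μ (by omega) (fun l h1 h2 => hμΓ l h1 (by omega)) i hi (j-1)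
          (by omega) (by omega)
    have := newton_aux B μ hj1 hEk
    nlinarith


lemma h_mono {a b b' : ℝ} (hb : 0 < b) (hbb' : b ≤ b') (hab : 0 < a + b) :
    a * b / (a + b) ≤ a * b' / (a + b') := by
  have hab' : 0 < a + b' := by linarith
  rw [div_le_div_iff₀ hab hab']
  nlinarith [mul_nonneg (sq_nonneg a) (sub_nonneg.2 hbb')]

lemma h_superadd {a₁ a₂ b₁ b₂ : ℝ} (hb₁ : 0 < b₁) (hb₂ : 0 < b₂)
    (h₁ : 0 < a₁ + b₁) (h₂ : 0 < a₂ + b₂) :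
    a₁ * b₁ / (a₁ + b₁) + a₂ * b₂ / (a₂ + b₂)
      ≤ (a₁ + a₂) * (b₁ + b₂) / (a₁ + a₂ + (b₁ + b₂)) := by
  have hs : 0 < a₁ + a₂ + (b₁ + b₂) := by linarith
  rw [div_add_div _ _ h₁.ne' h₂.ne', div_le_div_iff₀ (by positivity) hs]
  nlinarith [sq_nonneg (a₁ * b₂ - a₂ * b₁), mul_pos h₁ h₂]

/-- conversion: a*u/E = a*(u/v)/(a + u/v) when E = a*v + u. -/
lemma t_conv {a u v E : ℝ} (hv : 0 < v) (hE : E = a * v + u) (hE0 : E ≠ 0) :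
    a * u / E = a * (u / v) / (a + u / v) := by
  have hEv : a + u / v = E / v := by rw [hE]; field_simp
  rw [hEv]
  field_simp


lemma GF_le_pos {A : Finset (Fin n)} {m : ℕ} {w : Fin n → ℝ} (h : GF A m w) {j : ℕ}
    (hj : j ≤ m) : 0 < Es A j w := by
  rcases Nat.eq_zero_or_pos j with h0 | h0
  · rw [h0, Es_zero]; exact one_pos
  · exact h j h0 hj

lemma t_step {ax ay ux uy uz vx vy vz Ex Ey Ez : ℝ}
    (hvx : 0 < vx) (hvy : 0 < vy) (hvz : 0 < vz)
    (hux : 0 < ux) (huy : 0 < uy) (huz : 0 < uz)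
    (hEx : Ex = ax * vx + ux) (hEy : Ey = ay * vy + uy)
    (hEz : Ez = (ax + ay) * vz + uz)
    (hExpos : 0 < Ex) (hEypos : 0 < Ey) (hEzpos : 0 < Ez)
    (hq : ux / vx + uy / vy ≤ uz / vz) :
    ax * ux / Ex + ay * uy / Ey ≤ (ax + ay) * uz / Ez := by
  have hgxpos : 0 < ux / vx := div_pos hux hvx
  have hgypos : 0 < uy / vy := div_pos huy hvy
  have hgzpos : 0 < uz / vz := div_pos huz hvz
  have haxgx : 0 < ax + ux / vx := by
    have h1 : ax + ux / vx = Ex / vx := by rw [hEx]; field_simp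
    rw [h1]; positivity
  have haygy : 0 < ay + uy / vy := by
    have h1 : ay + uy / vy = Ey / vy := by rw [hEy]; field_simp
    rw [h1]; positivity
  rw [t_conv hvx hEx hExpos.ne', t_conv hvy hEy hEypos.ne', t_conv hvz hEz hEzpos.ne']
  calc ax * (ux / vx) / (ax + ux / vx) + ay * (uy / vy) / (ay + uy / vy)
      ≤ (ax + ay) * (ux / vx + uy / vy) / (ax + ay + (ux / vx + uy / vy)) :=
        h_superadd hgxpos hgypos haxgx haygy
    _ ≤ (ax + ay) * (uz / vz) / (ax + ay + uz / vz) :=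
        h_mono (by positivity) hq (by linarith)

/-- Marcus–Lopes superadditivity of σ_k/σ_{k-1}, extended to the Γ_k cone,
together with closure of the cone under addition. -/
lemma ML : ∀ k : ℕ, 1 ≤ k → ∀ A : Finset (Fin n), k ≤ A.card → ∀ x y : Fin n → ℝ,
    GF A k x → GF A k y →
    GF A k (fun i => x i + y i) ∧
    Es A k x / Es A (k-1) x + Es A k y / Es A (k-1) y
      ≤ Es A k (fun i => x i + y i) / Es A (k-1) (fun i => x i + y i) := by
  intro k
  induction k with
  | zero => intro h; omega
  | succ k ih =>
    intro _ A hcard x y hx hy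
    rcases Nat.eq_zero_or_pos k with hk0 | hk
    · -- base case k+1 = 1
      subst hk0
      have hsum : Es A 1 (fun i => x i + y i) = Es A 1 x + Es A 1 y := by
        rw [Es_one, Es_one, Es_one, ← Finset.sum_add_distrib]
      constructor
      · intro j hj1 hj2
        have hj : j = 1 := by omega
        subst hj
        rw [hsum]
        have h1 := hx 1 le_rfl le_rfl
        have h2 := hy 1 le_rfl le_rfl
        linarith
      · simp only [Nat.sub_self, Es_zero, div_one, hsum, le_refl]
    · -- inductive step, k ≥ 1
      simp only [Nat.add_sub_cancel]
      set z : Fin n → ℝ := fun i => x i + y i with hz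
      have hxk : GF A k x := fun j h1 h2 => hx j h1 (by omega)
      have hyk : GF A k y := fun j h1 h2 => hy j h1 (by omega)
      obtain ⟨hzk, _⟩ := ih hk A (by omega) x y hxk hyk
      have hEkxpos : 0 < Es A k x := GF_le_pos hxk le_rfl
      have hEkypos : 0 < Es A k y := GF_le_pos hyk le_rfl
      have hEkzpos : 0 < Es A k z := GF_le_pos hzk le_rfl
      have key : ∀ i ∈ A,
          x i * Es (A.erase i) k x / Es A k x + y i * Es (A.erase i) k y / Es A k y
            ≤ (x i + y i) * Es (A.erase i) k z / Es A k z := by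
        intro i hi
        set B := A.erase i with hB
        have hBcard : B.card = A.card - 1 := Finset.card_erase_of_mem hi
        have hGBx : GF B k x := fun j h1 h2 =>
          deleted_pos (k+1) A x hcard hx i hi j h1 (by omega)
        have hGBy : GF B k y := fun j h1 h2 =>
          deleted_pos (k+1) A y hcard hy i hi j h1 (by omega)
        obtain ⟨hGBz, hqB⟩ := ih hk B (by omega) x y hGBx hGBy
        have hexp : ∀ w : Fin n → ℝ, Es A k w = w i * Es B (k-1) w + Es B k w := by
          intro w
          have h0 := Es_erase hi (k-1) w
          rwa [show k - 1 + 1 = k by omega] at h0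
        exact t_step (GF_le_pos hGBx (by omega)) (GF_le_pos hGBy (by omega))
          (GF_le_pos hGBz (by omega)) (GF_le_pos hGBx le_rfl) (GF_le_pos hGBy le_rfl)
          (GF_le_pos hGBz le_rfl) (hexp x) (hexp y) (by simpa using hexp z)
          hEkxpos hEkypos hEkzpos hqB
      have H := Finset.sum_le_sum key
      rw [Finset.sum_add_distrib] at H
      have hsum : ∀ w : Fin n → ℝ,
          ∑ i ∈ A, w i * Es (A.erase i) k w / Es A k w
            = ((k+1 : ℕ) : ℝ) * Es A (k+1) w / Es A k w := by
        intro w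
        rw [← Finset.sum_div, euler A k w]
      have hsumz : ∑ i ∈ A, (x i + y i) * Es (A.erase i) k z / Es A k z
          = ((k+1 : ℕ) : ℝ) * Es A (k+1) z / Es A k z := by
        rw [← hsum z]
      rw [hsum x, hsum y, hsumz] at H
      have hkpos : (0:ℝ) < ((k+1 : ℕ) : ℝ) := by positivity
      have hquot : Es A (k+1) x / Es A k x + Es A (k+1) y / Es A k y
          ≤ Es A (k+1) z / Es A k z := by
        rw [mul_div_assoc, mul_div_assoc, mul_div_assoc] at H
        have h2 : ((k+1:ℕ):ℝ) * (Es A (k+1) x / Es A k x + Es A (k+1) y / Es A k y)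
            ≤ ((k+1:ℕ):ℝ) * (Es A (k+1) z / Es A k z) := by
          rw [mul_add]; exact H
        exact le_of_mul_le_mul_left h2 hkpos
      refine ⟨?_, hquot⟩
      intro j hj1 hj2
      rcases Nat.lt_or_ge j (k+1) with hj | hj
      · exact hzk j hj1 (by omega)
      · have hj' : j = k+1 := by omega
        subst hj'
        have hqxpos : 0 < Es A (k+1) x / Es A k x :=
          div_pos (hx (k+1) (by omega) le_rfl) hEkxpos
        have hqypos : 0 < Es A (k+1) y / Es A k y :=
          div_pos (hy (k+1) (by omega) le_rfl) hEkypos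
        have hqz : 0 < Es A (k+1) z / Es A k z := lt_of_lt_of_le (by linarith) hquot
        have h3 := mul_pos hqz hEkzpos
        rwa [div_mul_cancel₀ _ hEkzpos.ne'] at h3


lemma holder2 {θ a b c d : ℝ} (hθ0 : 0 < θ) (hθ1 : θ < 1) (ha : 0 < a) (hb : 0 < b)
    (hc : 0 < c) (hd : 0 < d) :
    a ^ θ * c ^ (1 - θ) + b ^ θ * d ^ (1 - θ) ≤ (a + b) ^ θ * (c + d) ^ (1 - θ) := by
  have hS : 0 < a + b := by linarith
  have hT : 0 < c + d := by linarith
  have hSθ : (0:ℝ) < (a + b) ^ θ := Real.rpow_pos_of_pos hS θ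
  have hTθ : (0:ℝ) < (c + d) ^ (1 - θ) := Real.rpow_pos_of_pos hT (1 - θ)
  have key : ∀ p q : ℝ, 0 < p → 0 < q →
      p ^ θ * q ^ (1-θ) ≤ (a+b) ^ θ * (c+d) ^ (1-θ) * (θ * (p/(a+b)) + (1-θ) * (q/(c+d))) →
      True := fun _ _ _ _ _ => trivial
  have am : ∀ p q : ℝ, 0 ≤ p → 0 ≤ q →
      (p/(a+b)) ^ θ * (q/(c+d)) ^ (1-θ) ≤ θ * (p/(a+b)) + (1-θ) * (q/(c+d)) :=
    fun p q hp hq => Real.geom_mean_le_arith_mean2_weighted hθ0.le (by linarith)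
      (by positivity) (by positivity) (by ring)
  have expand : ∀ p q : ℝ, 0 ≤ p → 0 ≤ q →
      p ^ θ * q ^ (1-θ)
        = (a+b) ^ θ * (c+d) ^ (1-θ) * ((p/(a+b)) ^ θ * (q/(c+d)) ^ (1-θ)) := by
    intro p q hp hq
    rw [Real.div_rpow hp hS.le, Real.div_rpow hq hT.le]
    field_simp
  calc a ^ θ * c ^ (1-θ) + b ^ θ * d ^ (1-θ)
      = (a+b) ^ θ * (c+d) ^ (1-θ)
          * ((a/(a+b)) ^ θ * (c/(c+d)) ^ (1-θ) + (b/(a+b)) ^ θ * (d/(c+d)) ^ (1-θ)) := by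
        rw [mul_add, ← expand a c ha.le hc.le, ← expand b d hb.le hd.le]
    _ ≤ (a+b) ^ θ * (c+d) ^ (1-θ)
          * ((θ * (a/(a+b)) + (1-θ) * (c/(c+d))) + (θ * (b/(a+b)) + (1-θ) * (d/(c+d)))) := by
        refine mul_le_mul_of_nonneg_left (add_le_add (am a c ha.le hc.le) (am b d hb.le hd.le))
          (by positivity)
    _ = (a+b) ^ θ * (c+d) ^ (1-θ) := by
        have h1 : θ * (a/(a+b)) + θ * (b/(a+b)) = θ := by
          field_simp
        have h2 : (1-θ) * (c/(c+d)) + (1-θ) * (d/(c+d)) = 1-θ := by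
          field_simp
        have h3 : (θ * (a/(a+b)) + (1-θ) * (c/(c+d))) + (θ * (b/(a+b)) + (1-θ) * (d/(c+d)))
            = 1 := by rw [show (θ * (a/(a+b)) + (1-θ) * (c/(c+d))) + (θ * (b/(a+b)) + (1-θ) * (d/(c+d))) = (θ * (a/(a+b)) + θ * (b/(a+b))) + ((1-θ) * (c/(c+d)) + (1-θ) * (d/(c+d))) by ring, h1, h2]; ring
        rw [h3, mul_one]

/-- superadditivity of σ_k^{1/k} on the cone. -/
lemma pow_superadd : ∀ k : ℕ, 1 ≤ k → ∀ A : Finset (Fin n), k ≤ A.card →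
    ∀ x y : Fin n → ℝ, GF A k x → GF A k y →
    Es A k x ^ (1/(k:ℝ)) + Es A k y ^ (1/(k:ℝ))
      ≤ Es A k (fun i => x i + y i) ^ (1/(k:ℝ)) := by
  intro k
  induction k with
  | zero => intro h; omega
  | succ k ih =>
    intro _ A hcard x y hx hy
    rcases Nat.eq_zero_or_pos k with hk0 | hk
    · -- base case : k+1 = 1
      subst hk0
      have h1 : (1:ℝ)/((0+1:ℕ):ℝ) = 1 := by norm_num
      rw [h1, Real.rpow_one, Real.rpow_one, Real.rpow_one, Es_one, Es_one, Es_one,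
        ← Finset.sum_add_distrib]
    · -- step
      set z : Fin n → ℝ := fun i => x i + y i with hz
      have hxk : GF A k x := fun j h1 h2 => hx j h1 (by omega)
      have hyk : GF A k y := fun j h1 h2 => hy j h1 (by omega)
      obtain ⟨hzk1, hquot⟩ := ML (k+1) (by omega) A hcard x y hx hy
      simp only [Nat.add_sub_cancel] at hquot
      have hihq := ih hk A (by omega) x y hxk hyk
      -- abbreviations
      set θ : ℝ := 1/((k:ℝ)+1) with hθ
      have hkR : (0:ℝ) < (k:ℝ) := by exact_mod_cast hk
      have hθ0 : 0 < θ := by rw [hθ]; positivity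
      have hθ1 : θ < 1 := by
        rw [hθ, div_lt_one (by linarith)]
        linarith
      set Fx := Es A k x with hFx
      set Fy := Es A k y with hFy
      set Fz := Es A k z with hFz
      set Ex := Es A (k+1) x with hEx
      set Ey := Es A (k+1) y with hEy
      set Ez := Es A (k+1) z with hEz
      have hFxp : 0 < Fx := GF_le_pos hxk le_rfl
      have hFyp : 0 < Fy := GF_le_pos hyk le_rfl
      have hFzp : 0 < Fz := GF_le_pos (fun j h1 h2 => hzk1 j h1 (by omega) : GF A k z) le_rfl
      have hExp : 0 < Ex := hx (k+1) (by omega) le_rfl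
      have hEyp : 0 < Ey := hy (k+1) (by omega) le_rfl
      have hEzp : 0 < Ez := hzk1 (k+1) (by omega) le_rfl
      set qx := Ex / Fx with hqx
      set qy := Ey / Fy with hqy
      set qz := Ez / Fz with hqz
      have hqxp : 0 < qx := div_pos hExp hFxp
      have hqyp : 0 < qy := div_pos hEyp hFyp
      set αx := Fx ^ (1/(k:ℝ)) with hαx
      set αy := Fy ^ (1/(k:ℝ)) with hαy
      have hαxp : 0 < αx := Real.rpow_pos_of_pos hFxp _
      have hαyp : 0 < αy := Real.rpow_pos_of_pos hFyp _
      -- Ez ≥ (qx + qy) * (αx + αy)^k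
      have hFz_ge : (αx + αy) ^ (k:ℕ) ≤ Fz := by
        have h1 : αx + αy ≤ Fz ^ (1/(k:ℝ)) := hihq
        have h2 : (αx + αy) ^ (k:ℕ) ≤ (Fz ^ (1/(k:ℝ))) ^ (k:ℕ) :=
          pow_le_pow_left₀ (by positivity) h1 k
        have h3 : (Fz ^ (1/(k:ℝ))) ^ (k:ℕ) = Fz := by
          rw [← Real.rpow_natCast (Fz ^ (1/(k:ℝ))) k, ← Real.rpow_mul hFzp.le]
          rw [one_div, inv_mul_cancel₀ hkR.ne', Real.rpow_one]
        rwa [h3] at h2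
      have hEz_ge : (qx + qy) * (αx + αy) ^ (k:ℕ) ≤ Ez := by
        have h1 : qx + qy ≤ qz := hquot
        have h2 : Ez = qz * Fz := by rw [hqz, div_mul_cancel₀ _ hFzp.ne']
        calc (qx + qy) * (αx + αy) ^ (k:ℕ) ≤ (qx + qy) * Fz :=
              mul_le_mul_of_nonneg_left hFz_ge (by positivity)
          _ ≤ qz * Fz := mul_le_mul_of_nonneg_right h1 hFzp.le
          _ = Ez := h2.symm
      -- identifications of rpow powers
      have hkc : ((k:ℝ)+1) = ((k+1 : ℕ) : ℝ) := by push_cast; ring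
      have hθeq : (1 : ℝ)/((k+1:ℕ):ℝ) = θ := by rw [hθ, hkc]
      have hxid : Ex ^ θ = qx ^ θ * αx ^ (1-θ) := by
        have h1 : Ex = qx * Fx := by rw [hqx, div_mul_cancel₀ _ hFxp.ne']
        rw [h1, Real.mul_rpow hqxp.le hFxp.le]
        congr 1
        rw [hαx, ← Real.rpow_mul hFxp.le]
        congr 1
        rw [hθ]
        field_simp
        ring
      have hyid : Ey ^ θ = qy ^ θ * αy ^ (1-θ) := by
        have h1 : Ey = qy * Fy := by rw [hqy, div_mul_cancel₀ _ hFyp.ne']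
        rw [h1, Real.mul_rpow hqyp.le hFyp.le]
        congr 1
        rw [hαy, ← Real.rpow_mul hFyp.le]
        congr 1
        rw [hθ]
        field_simp
        ring
      have hzid : ((qx + qy) * (αx + αy) ^ (k:ℕ)) ^ θ
          = (qx + qy) ^ θ * (αx + αy) ^ (1-θ) := by
        rw [Real.mul_rpow (by positivity) (by positivity)]
        congr 1
        rw [← Real.rpow_natCast (αx + αy) k, ← Real.rpow_mul (by positivity)]
        congr 1
        rw [hθ]
        field_simp
        ring
      rw [hθeq, hxid, hyid]
      calc qx ^ θ * αx ^ (1-θ) + qy ^ θ * αy ^ (1-θ)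
          ≤ (qx + qy) ^ θ * (αx + αy) ^ (1-θ) := holder2 hθ0 hθ1 hqxp hqyp hαxp hαyp
        _ = ((qx + qy) * (αx + αy) ^ (k:ℕ)) ^ θ := hzid.symm
        _ ≤ Ez ^ θ := Real.rpow_le_rpow (by positivity) hEz_ge hθ0.le


lemma GF_smul {A : Finset (Fin n)} {k : ℕ} {x : Fin n → ℝ} (hx : GF A k x) {c : ℝ}
    (hc : 0 < c) : GF A k (fun i => c * x i) := by
  intro j h1 h2
  rw [Es_smul]
  exact mul_pos (pow_pos hc j) (hx j h1 h2)

end GammaAux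

open GammaAux in
theorem stmt_3 (n k : ℕ) (hk : 1 ≤ k) (hkn : k ≤ n) :
    ConcaveOn ℝ (GammaPlus n k) (fun x => Real.log (esymm n k x)) := by
  have hcard : k ≤ (Finset.univ : Finset (Fin n)).card := by
    rw [Finset.card_univ, Fintype.card_fin]; exact hkn
  have hGF : ∀ x : Fin n → ℝ, x ∈ GammaPlus n k → GF Finset.univ k x := fun x hx => hx
  have hGF' : ∀ x : Fin n → ℝ, GF Finset.univ k x → x ∈ GammaPlus n k := fun x hx => hx
  have hkRpos : (0:ℝ) < (k:ℝ) := by exact_mod_cast hk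
  have hkne : ((k:ℕ):ℝ) ≠ 0 := ne_of_gt hkRpos
  have scale_rpow : ∀ (c E : ℝ), 0 < c → 0 < E →
      (c ^ (k:ℕ) * E) ^ (1/(k:ℝ)) = c * E ^ (1/(k:ℝ)) := by
    intro c E hc hE
    rw [Real.mul_rpow (by positivity) hE.le, ← Real.rpow_natCast c k,
      ← Real.rpow_mul hc.le]
    congr 1
    rw [mul_one_div, div_self hkne, Real.rpow_one]
  have hcomb : ∀ (x y : Fin n → ℝ), x ∈ GammaPlus n k → y ∈ GammaPlus n k →
      ∀ (a b : ℝ), 0 ≤ a → 0 ≤ b → a + b = 1 → (a • x + b • y) ∈ GammaPlus n k := by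
    intro x y hx hy a b ha hb hab
    rcases eq_or_lt_of_le ha with ha0 | ha0
    · have ha' : a = 0 := ha0.symm
      subst ha'
      have hb1 : b = 1 := by linarith
      subst hb1
      simpa using hy
    rcases eq_or_lt_of_le hb with hb0 | hb0
    · have hb' : b = 0 := hb0.symm
      subst hb'
      have ha1 : a = 1 := by linarith
      subst ha1
      simpa using hx
    · have h1 := (ML k hk Finset.univ hcard (fun i => a * x i) (fun i => b * y i)
        (GF_smul (hGF x hx) ha0) (GF_smul (hGF y hy) hb0)).1
      have he : (fun i => a * x i + b * y i) = a • x + b • y := by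
        funext i; simp
      rw [he] at h1
      exact hGF' _ h1
  refine ⟨?_, ?_⟩
  · intro x hx y hy a b ha hb hab
    exact hcomb x y hx hy a b ha hb hab
  · intro x hx y hy a b ha hb hab
    simp only [smul_eq_mul]
    rcases eq_or_lt_of_le ha with ha0 | ha0
    · have ha' : a = 0 := ha0.symm
      subst ha'
      have hb1 : b = 1 := by linarith
      subst hb1
      simp
    rcases eq_or_lt_of_le hb with hb0 | hb0
    · have hb' : b = 0 := hb0.symm
      subst hb'
      have ha1 : a = 1 := by linarith
      subst ha1
      simp
    -- main case
    have hz := hGF _ (hcomb x y hx hy a b ha hb hab)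
    have hx' : GF Finset.univ k x := hGF x hx
    have hy' : GF Finset.univ k y := hGF y hy
    have hExp : 0 < Es Finset.univ k x := hx' k hk le_rfl
    have hEyp : 0 < Es Finset.univ k y := hy' k hk le_rfl
    have hEzp : 0 < Es Finset.univ k (a • x + b • y) := hz k hk le_rfl
    have hsup := pow_superadd k hk Finset.univ hcard (fun i => a * x i) (fun i => b * y i)
      (GF_smul hx' ha0) (GF_smul hy' hb0)
    rw [Es_smul, Es_smul] at hsup
    have he : (fun i => a * x i + b * y i) = a • x + b • y := by
      funext i; simp
    rw [he, scale_rpow a _ ha0 hExp, scale_rpow b _ hb0 hEyp] at hsup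
    set θ : ℝ := 1/(k:ℝ) with hθ
    have hθpos : 0 < θ := by rw [hθ]; positivity
    have hmem1 : Es Finset.univ k x ^ θ ∈ Set.Ioi (0:ℝ) := Real.rpow_pos_of_pos hExp θ
    have hmem2 : Es Finset.univ k y ^ θ ∈ Set.Ioi (0:ℝ) := Real.rpow_pos_of_pos hEyp θ
    have hlog := strictConcaveOn_log_Ioi.concaveOn.2 hmem1 hmem2 ha0.le hb0.le hab
    simp only [smul_eq_mul] at hlog
    have hmono : Real.log (a * Es Finset.univ k x ^ θ + b * Es Finset.univ k y ^ θ)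
        ≤ Real.log (Es Finset.univ k (a • x + b • y) ^ θ) :=
      Real.log_le_log (by positivity) hsup
    have h2 := hlog.trans hmono
    rw [Real.log_rpow hExp, Real.log_rpow hEyp, Real.log_rpow hEzp] at h2
    show a * Real.log (Es Finset.univ k x) + b * Real.log (Es Finset.univ k y)
        ≤ Real.log (Es Finset.univ k (a • x + b • y))
    have h3 : θ * (a * Real.log (Es Finset.univ k x) + b * Real.log (Es Finset.univ k y))
        ≤ θ * Real.log (Es Finset.univ k (a • x + b • y)) := by
      calc θ * (a * Real.log (Es Finset.univ k x) + b * Real.log (Es Finset.univ k y))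
          = a * (θ * Real.log (Es Finset.univ k x))
            + b * (θ * Real.log (Es Finset.univ k y)) := by ring
        _ ≤ θ * Real.log (Es Finset.univ k (a • x + b • y)) := h2
    exact le_of_mul_le_mul_left h3 hθpos
end

section
/- Newton-MacLaurin inequality: for λ in the closure of Γ_k^+ (in particular for λ with all σ_j(λ) ≥ 0, j ≤ k+1), one has (k+1)σ_{k+1}(λ) ≤ ((n−k)/n)·σ_1(λ)·σ_k(λ). -/
open Finset

lemma esymm_eq_multiset (n k : ℕ) (x : Fin n → ℝ) :
    (Multiset.map x (Finset.univ : Finset (Fin n)).val).esymm k = esymm n k x :=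
  Finset.esymm_map_val x _ k

lemma esymm_zero' (n : ℕ) (x : Fin n → ℝ) : esymm n 0 x = 1 := by simp [esymm]

lemma card_univ_val (n : ℕ) : Multiset.card (Finset.univ : Finset (Fin n)).val = n := by
  simp

lemma list_ofFn_get_cast {α : Type*} (l : List α) {m : ℕ} (h : l.length = m) :
    List.ofFn (fun i : Fin m => l.get (Fin.cast h.symm i)) = l := by
  subst h; exact List.ofFn_get l

lemma exists_tuple (t : Multiset ℝ) (m : ℕ) (ht : Multiset.card t = m) :
    ∃ y : Fin m → ℝ, Multiset.map y (Finset.univ : Finset (Fin m)).val = t := by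
  subst ht
  refine ⟨fun i => t.toList.get (Fin.cast t.length_toList.symm i), ?_⟩
  have h1 : (Finset.univ : Finset (Fin (Multiset.card t))).val
      = ((List.finRange (Multiset.card t) : List (Fin (Multiset.card t))) : Multiset (Fin (Multiset.card t))) := by
    rw [Fin.univ_def]
  rw [h1, Multiset.map_coe, ← List.ofFn_eq_map, list_ofFn_get_cast, Multiset.coe_toList]
  exact t.length_toList

variable {ι : Type*} [DecidableEq ι]

lemma sum_prod_erase (S : Finset ι) (x : ι → ℝ) (hS : S.Nonempty) :
    ∑ k ∈ S, ∏ j ∈ S.erase k, x j = ∑ t ∈ S.powersetCard (S.card - 1), ∏ j ∈ t, x j := by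
  refine Finset.sum_bij (fun k _ => S.erase k) ?_ ?_ ?_ ?_
  · intro k hk
    rw [Finset.mem_powersetCard]
    exact ⟨Finset.erase_subset _ _, Finset.card_erase_of_mem hk⟩
  · intro a ha b hb h
    by_contra hab
    have h2 : a ∈ S.erase b := Finset.mem_erase.2 ⟨hab, ha⟩
    rw [← h] at h2
    exact (Finset.mem_erase.1 h2).1 rfl
  · intro t ht
    rw [Finset.mem_powersetCard] at ht
    obtain ⟨hts, htc⟩ := ht
    have hS1 : 1 ≤ S.card := Finset.card_pos.2 hS
    have hcard : (S \ t).card = 1 := by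
      rw [Finset.card_sdiff_of_subset hts, htc]; omega
    obtain ⟨a, ha⟩ := Finset.card_eq_one.1 hcard
    have ha' : a ∈ S \ t := ha ▸ Finset.mem_singleton_self a
    have haS : a ∈ S := (Finset.mem_sdiff.1 ha').1
    have hat : a ∉ t := (Finset.mem_sdiff.1 ha').2
    refine ⟨a, haS, ?_⟩
    refine (Finset.eq_of_subset_of_card_le (Finset.subset_erase.2 ⟨hts, hat⟩) ?_).symm
    rw [Finset.card_erase_of_mem haS, htc]
  · intros; rfl



lemma powersetCard_erase (n m : ℕ) (i : Fin n) :
    ((Finset.univ : Finset (Fin n)).erase i).powersetCard m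
      = ((Finset.univ : Finset (Fin n)).powersetCard m).filter (fun t => i ∉ t) := by
  ext t
  simp only [Finset.mem_powersetCard, Finset.subset_erase, Finset.mem_filter]
  tauto

lemma prod_erase_mul (n : ℕ) (x : Fin n → ℝ) {i k : Fin n} (h : k ≠ i) :
    (∏ j ∈ univ.erase i, x j) * (∏ j ∈ univ.erase k, x j)
      = (∏ j ∈ (univ.erase i).erase k, x j) * ∏ j, x j := by
  have hk : k ∈ univ.erase i := Finset.mem_erase.2 ⟨h, Finset.mem_univ k⟩
  have hi' : i ∈ univ.erase k := Finset.mem_erase.2 ⟨fun hh => h hh.symm, Finset.mem_univ i⟩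
  have e1 : ∏ j ∈ univ.erase i, x j = x k * ∏ j ∈ (univ.erase i).erase k, x j :=
    (Finset.mul_prod_erase _ _ hk).symm
  have e2 : (univ.erase k).erase i = (univ.erase i).erase k := Finset.erase_right_comm
  have e3 : ∏ j ∈ univ.erase k, x j = x i * ∏ j ∈ (univ.erase i).erase k, x j := by
    rw [← e2]; exact (Finset.mul_prod_erase _ _ hi').symm
  have e4 : ∏ j, x j = x i * ∏ j ∈ univ.erase i, x j :=
    (Finset.mul_prod_erase _ _ (Finset.mem_univ i)).symm
  rw [e1, e3, e4, e1]; ring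

lemma sum_esymmDel (n m : ℕ) (x : Fin n → ℝ) (hm : m ≤ n) :
    ∑ i : Fin n, esymmDel n m x i = ((n - m : ℕ) : ℝ) * esymm n m x := by
  unfold esymmDel
  calc ∑ i : Fin n, ∑ t ∈ ((Finset.univ : Finset (Fin n)).erase i).powersetCard m, ∏ j ∈ t, x j
      = ∑ i : Fin n, ∑ t ∈ (Finset.univ : Finset (Fin n)).powersetCard m,
          (if i ∉ t then ∏ j ∈ t, x j else 0) := by
        refine Finset.sum_congr rfl fun i _ => ?_
        rw [powersetCard_erase, Finset.sum_filter]
    _ = ∑ t ∈ (Finset.univ : Finset (Fin n)).powersetCard m,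
          ∑ i : Fin n, (if i ∉ t then ∏ j ∈ t, x j else 0) := Finset.sum_comm
    _ = ∑ t ∈ (Finset.univ : Finset (Fin n)).powersetCard m, ((n - m : ℕ) : ℝ) * ∏ j ∈ t, x j := by
        refine Finset.sum_congr rfl fun t ht => ?_
        have htc : t.card = m := (Finset.mem_powersetCard.1 ht).2
        rw [Finset.sum_ite, Finset.sum_const, Finset.sum_const_zero, add_zero]
        have : Finset.filter (fun i => i ∉ t) Finset.univ = tᶜ := by
          ext j; simp [Finset.mem_compl]
        rw [this, Finset.card_compl, htc]
        simp [nsmul_eq_mul, Fintype.card_fin]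
    _ = ((n - m : ℕ) : ℝ) * esymm n m x := by rw [← Finset.mul_sum, esymm]

lemma newton_base (m : ℕ) (x : Fin (m + 2) → ℝ) :
    2 * ((m : ℝ) + 2) * (esymm (m + 2) m x * esymm (m + 2) (m + 2) x)
      ≤ ((m : ℝ) + 1) * (esymm (m + 2) (m + 1) x) ^ 2 := by
  set P : Fin (m + 2) → ℝ := fun i => ∏ j ∈ univ.erase i, x j with hP
  have hcu : (Finset.univ : Finset (Fin (m + 2))).card = m + 2 := by simp
  have h1 : ∑ i, P i = esymm (m + 2) (m + 1) x := by
    rw [hP, sum_prod_erase univ x Finset.univ_nonempty, esymm, hcu]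
    norm_num
  have hen : esymm (m + 2) (m + 2) x = ∏ j, x j := by
    have hps : Finset.powersetCard (m + 2) (Finset.univ : Finset (Fin (m + 2))) = {univ} := by
      have h := Finset.powersetCard_self (Finset.univ : Finset (Fin (m + 2)))
      rwa [hcu] at h
    rw [esymm, hps]
    simp
  have h2 : ∑ i, (P i * ∑ k ∈ univ.erase i, P k)
      = 2 * (esymm (m + 2) m x * esymm (m + 2) (m + 2) x) := by
    have inner : ∀ i : Fin (m + 2), (P i * ∑ k ∈ univ.erase i, P k)
        = (∏ j, x j) * esymmDel (m + 2) m x i := by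
      intro i
      rw [Finset.mul_sum]
      have hne : (univ.erase i).Nonempty := by
        rw [← Finset.card_pos, Finset.card_erase_of_mem (Finset.mem_univ i), hcu]; omega
      have hca : (univ.erase i).card - 1 = m := by
        rw [Finset.card_erase_of_mem (Finset.mem_univ i), hcu]
        omega
      calc ∑ k ∈ univ.erase i, P i * P k
          = ∑ k ∈ univ.erase i, ((∏ j ∈ (univ.erase i).erase k, x j) * ∏ j, x j) := by
            refine Finset.sum_congr rfl fun k hk => ?_
            exact prod_erase_mul (m + 2) x (Finset.mem_erase.1 hk).1
        _ = (∏ j, x j) * ∑ k ∈ univ.erase i, ∏ j ∈ (univ.erase i).erase k, x j := by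
            rw [Finset.mul_sum]; exact Finset.sum_congr rfl fun k _ => mul_comm _ _
        _ = (∏ j, x j) * esymmDel (m + 2) m x i := by
            rw [sum_prod_erase _ x hne, hca, esymmDel]
    rw [Finset.sum_congr rfl fun i _ => inner i, ← Finset.mul_sum,
      sum_esymmDel (m + 2) m x (by omega)]
    have : ((m + 2 - m : ℕ) : ℝ) = 2 := by norm_num
    rw [this, hen]; ring
  have h3 : (∑ i, P i) ^ 2 = ∑ i, (P i) ^ 2 + ∑ i, (P i * ∑ k ∈ univ.erase i, P k) := by
    rw [sq, Finset.sum_mul]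
    rw [← Finset.sum_add_distrib]
    refine Finset.sum_congr rfl fun i _ => ?_
    rw [← Finset.add_sum_erase _ P (Finset.mem_univ i)]
    ring
  have h4 : (∑ i, P i) ^ 2 ≤ ((m : ℝ) + 2) * ∑ i, (P i) ^ 2 := by
    have := sq_sum_le_card_mul_sum_sq (s := (Finset.univ : Finset (Fin (m + 2)))) (f := P)
    rw [hcu] at this
    push_cast at this ⊢
    convert this using 2 <;> norm_num
  rw [← h1]
  have hC : ∑ i, (P i * ∑ k ∈ univ.erase i, P k) = (∑ i, P i) ^ 2 - ∑ i, (P i) ^ 2 := by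
    linarith
  have h5 : ((m : ℝ) + 2) * ((∑ i, P i) ^ 2 - ∑ i, (P i) ^ 2)
      ≤ ((m : ℝ) + 1) * (∑ i, P i) ^ 2 := by nlinarith [h4]
  calc 2 * ((m : ℝ) + 2) * (esymm (m + 2) m x * esymm (m + 2) (m + 2) x)
      = ((m : ℝ) + 2) * (2 * (esymm (m + 2) m x * esymm (m + 2) (m + 2) x)) := by ring
    _ = ((m : ℝ) + 2) * (∑ i, (P i * ∑ k ∈ univ.erase i, P k)) := by rw [h2]
    _ = ((m : ℝ) + 2) * ((∑ i, P i) ^ 2 - ∑ i, (P i) ^ 2) := by rw [hC]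
    _ ≤ ((m : ℝ) + 1) * (∑ i, P i) ^ 2 := h5

open Polynomial in
lemma deriv_esymm (N : ℕ) (hN : 2 ≤ N) (x : Fin (N + 1) → ℝ) :
    ∃ y : Fin N → ℝ, ∀ m : ℕ, m ≤ N →
      ((N : ℝ) + 1) * esymm N m y = ((N + 1 - m : ℕ) : ℝ) * esymm (N + 1) m x := by
  classical
  set s : Multiset ℝ := Multiset.map x (Finset.univ : Finset (Fin (N + 1))).val with hs
  have hsc : Multiset.card s = N + 1 := by rw [hs, Multiset.card_map, card_univ_val]
  set p : ℝ[X] := (s.map fun a => X - C a).prod with hp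
  have hmonic : p.Monic := monic_multiset_prod_of_monic _ _ fun a _ => monic_X_sub_C a
  have hdeg : p.natDegree = N + 1 := by
    rw [hp, Polynomial.natDegree_multiset_prod_X_sub_C_eq_card, hsc]
  have hroots : p.roots = s := Polynomial.roots_multiset_prod_X_sub_C s
  set q : ℝ[X] := derivative p with hq
  have hqd_le : q.natDegree ≤ N := by
    have := Polynomial.natDegree_derivative_le p
    rwa [hdeg, Nat.add_sub_cancel] at this
  have hqroots_ge : N ≤ Multiset.card q.roots := by
    have := Polynomial.card_roots_le_derivative p
    rw [hroots, hsc, ← hq] at this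
    omega
  have hq0 : q ≠ 0 := by
    intro h
    rw [h, Polynomial.roots_zero] at hqroots_ge
    simp at hqroots_ge
    omega
  have hqroots_le : Multiset.card q.roots ≤ q.natDegree := Polynomial.card_roots' q
  have hqroots : Multiset.card q.roots = N := le_antisymm (hqroots_le.trans hqd_le) hqroots_ge
  have hqdeg : q.natDegree = N := le_antisymm hqd_le (hqroots ▸ hqroots_le)
  have hsplit : Splits q := Polynomial.splits_iff_card_roots.2 (by rw [hqroots, hqdeg])
  have hfact : q = C q.leadingCoeff * (q.roots.map fun a => X - C a).prod :=
    hsplit.eq_prod_roots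
  have hlead : q.leadingCoeff = (N : ℝ) + 1 := by
    rw [Polynomial.leadingCoeff, hqdeg, hq, Polynomial.coeff_derivative]
    have : p.coeff (N + 1) = 1 := by
      have := hmonic.leadingCoeff
      rwa [Polynomial.leadingCoeff, hdeg] at this
    rw [this]; push_cast; ring
  obtain ⟨y, hy⟩ := exists_tuple q.roots N hqroots
  refine ⟨y, fun m hm => ?_⟩
  have hcoeffp : p.coeff (N + 1 - m) = (-1) ^ m * s.esymm m := by
    have := Multiset.prod_X_sub_C_coeff s (k := N + 1 - m) (by omega)
    rw [hsc] at this
    rw [← hp] at this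
    rw [this]
    congr 2 <;> omega
  have hcoeffq : q.coeff (N - m) = ((N : ℝ) + 1) * ((-1) ^ m * (q.roots).esymm m) := by
    conv_lhs => rw [hfact]
    rw [Polynomial.coeff_C_mul, hlead]
    have := Multiset.prod_X_sub_C_coeff q.roots (k := N - m) (by rw [hqroots]; omega)
    rw [hqroots] at this
    rw [this, show N - (N - m) = m from by omega]

  have hcd : q.coeff (N - m) = p.coeff (N - m + 1) * ((N : ℝ) - m + 1) := by
    rw [hq, Polynomial.coeff_derivative]
    push_cast [Nat.cast_sub (show m ≤ N from hm)]
    ring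
  have hNm : N - m + 1 = N + 1 - m := by omega
  rw [hNm, hcoeffp] at hcd
  rw [hcoeffq] at hcd
  have hesy : (q.roots).esymm m = esymm N m y := by rw [← hy, esymm_eq_multiset]
  have hesx : s.esymm m = esymm (N + 1) m x := by rw [hs, esymm_eq_multiset]
  have hpow : ((-1 : ℝ) ^ m) ≠ 0 := by positivity
  have hcast : ((N + 1 - m : ℕ) : ℝ) = (N : ℝ) - m + 1 := by
    push_cast [Nat.cast_sub (show m ≤ N + 1 by omega)]; ring
  rw [hesy, hesx] at hcd
  rw [hcast]
  apply mul_left_cancel₀ hpow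
  rw [show (-1 : ℝ) ^ m * (((N : ℝ) + 1) * esymm N m y)
      = ((N : ℝ) + 1) * ((-1 : ℝ) ^ m * esymm N m y) from by ring, hcd]
  ring

lemma choose_aux (n m : ℕ) : (n + 1 - m) * (n + 1).choose m = (n + 1) * n.choose m := by
  rcases Nat.lt_or_ge n m with h | h
  · rcases Nat.eq_or_lt_of_le h with rfl | h'
    · simp [Nat.choose_succ_self_right, Nat.choose_succ_self]
    · rw [Nat.choose_eq_zero_of_lt (by omega), Nat.choose_eq_zero_of_lt (by omega)]
      simp
  · have h1 := Nat.add_one_mul_choose_eq n m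
    have h2 := Nat.choose_succ_right_eq (n + 1) m
    calc (n + 1 - m) * (n + 1).choose m = (n + 1).choose m * (n + 1 - m) := Nat.mul_comm _ _
      _ = (n + 1).choose (m + 1) * (m + 1) := by rw [Nat.choose_succ_right_eq]
      _ = (n + 1) * n.choose m := by rw [← Nat.add_one_mul_choose_eq]

lemma newton_ineq (n : ℕ) : ∀ j : ℕ, 1 ≤ j → j + 1 ≤ n → ∀ x : Fin n → ℝ,
    esymm n (j - 1) x * esymm n (j + 1) x * ((n.choose j : ℝ)) ^ 2
      ≤ (esymm n j x) ^ 2 * (n.choose (j - 1) : ℝ) * (n.choose (j + 1) : ℝ) := by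
  induction n with
  | zero => intro j hj hjn; omega
  | succ N ih =>
    intro j hj hjn x
    rcases Nat.lt_or_ge N (j + 1) with hcase | hcase
    · -- base case : j = N
      have hjN : j = N := by omega
      subst hjN
      obtain ⟨m, rfl⟩ : ∃ m, j = m + 1 := ⟨j - 1, by omega⟩
      have hb := newton_base m x
      have hc1 : (((m + 2).choose (m + 1) : ℕ) : ℝ) = (m : ℝ) + 2 := by
        rw [Nat.choose_succ_self_right]; push_cast; ring
      have hc2 : (((m + 2).choose (m + 2) : ℕ) : ℝ) = 1 := by rw [Nat.choose_self]; norm_num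
      have hc3 : (((m + 2).choose m : ℕ) : ℝ) = ((m : ℝ) + 2) * ((m : ℝ) + 1) / 2 := by
        have h : (m + 2).choose m = (m + 2).choose 2 := by
          have h0 := Nat.choose_symm (show 2 ≤ m + 2 by omega)
          simpa using h0
        rw [h, Nat.cast_choose_two]; push_cast; ring
      show esymm (m + 2) (m + 1 - 1) x * esymm (m + 2) (m + 2) x * (((m + 2).choose (m + 1) : ℕ) : ℝ) ^ 2
        ≤ esymm (m + 2) (m + 1) x ^ 2 * (((m + 2).choose (m + 1 - 1) : ℕ) : ℝ) * (((m + 2).choose (m + 2) : ℕ) : ℝ)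
      rw [show m + 1 - 1 = m from rfl, hc1, hc2, hc3]
      have h6 := mul_le_mul_of_nonneg_left hb (show (0:ℝ) ≤ ((m:ℝ)+2)/2 by positivity)
      linarith [h6]
    · -- inductive step
      have hN2 : 2 ≤ N := by omega
      obtain ⟨y, hy⟩ := deriv_esymm N hN2 x
      have key := ih j hj hcase y
      have k1 := hy (j - 1) (by omega)
      have k2 := hy j (by omega)
      have k3 := hy (j + 1) (by omega)
      set a : ℝ := ((N + 1 - (j - 1) : ℕ) : ℝ) with hadef
      set b : ℝ := ((N + 1 - j : ℕ) : ℝ) with hbdef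
      set c : ℝ := ((N + 1 - (j + 1) : ℕ) : ℝ) with hcdef
      have ha : 0 < a := by rw [hadef]; exact_mod_cast Nat.pos_of_ne_zero (by omega)
      have hbp : 0 < b := by rw [hbdef]; exact_mod_cast Nat.pos_of_ne_zero (by omega)
      have hcp : 0 < c := by rw [hcdef]; exact_mod_cast Nat.pos_of_ne_zero (by omega)
      have c1 : a * (((N + 1).choose (j - 1) : ℕ) : ℝ) = ((N : ℝ) + 1) * ((N.choose (j - 1) : ℕ) : ℝ) := by
        rw [hadef]; exact_mod_cast congrArg (fun t : ℕ => (t : ℝ)) (choose_aux N (j - 1))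
      have c2 : b * (((N + 1).choose j : ℕ) : ℝ) = ((N : ℝ) + 1) * ((N.choose j : ℕ) : ℝ) := by
        rw [hbdef]; exact_mod_cast congrArg (fun t : ℕ => (t : ℝ)) (choose_aux N j)
      have c3 : c * (((N + 1).choose (j + 1) : ℕ) : ℝ) = ((N : ℝ) + 1) * ((N.choose (j + 1) : ℕ) : ℝ) := by
        rw [hcdef]; exact_mod_cast congrArg (fun t : ℕ => (t : ℝ)) (choose_aux N (j + 1))
      set A := esymm (N + 1) (j - 1) x
      set B := esymm (N + 1) j x
      set D := esymm (N + 1) (j + 1) x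
      set A' := esymm N (j - 1) y
      set B' := esymm N j y
      set D' := esymm N (j + 1) y
      set CNj : ℝ := ((N.choose j : ℕ) : ℝ)
      set CNjm : ℝ := ((N.choose (j - 1) : ℕ) : ℝ)
      set CNjp : ℝ := ((N.choose (j + 1) : ℕ) : ℝ)
      set CMj : ℝ := (((N + 1).choose j : ℕ) : ℝ)
      set CMjm : ℝ := (((N + 1).choose (j - 1) : ℕ) : ℝ)
      set CMjp : ℝ := (((N + 1).choose (j + 1) : ℕ) : ℝ)
      -- key scaled by (N+1)^2
      have key2 : ((N : ℝ) + 1) ^ 2 * (A' * D' * CNj ^ 2)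
          ≤ ((N : ℝ) + 1) ^ 2 * (B' ^ 2 * CNjm * CNjp) := by
        have := mul_le_mul_of_nonneg_left key (show (0:ℝ) ≤ ((N : ℝ) + 1) ^ 2 by positivity)
        linarith [this]
      have keyL : ((N : ℝ) + 1) ^ 2 * (A' * D' * CNj ^ 2) = (a * A) * (c * D) * CNj ^ 2 := by
        linear_combination CNj ^ 2 * ((((N : ℝ) + 1) * D') * k1 + (a * A) * k3)
      have keyR : ((N : ℝ) + 1) ^ 2 * (B' ^ 2 * CNjm * CNjp) = (b * B) ^ 2 * CNjm * CNjp := by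
        linear_combination CNjm * CNjp * ((((N : ℝ) + 1) * B' + b * B) * k2)
      rw [keyL, keyR] at key2
      -- now derive the goal
      have hpos : (0 : ℝ) < a * c * b ^ 2 := by positivity
      refine le_of_mul_le_mul_left ?_ hpos
      have e1 : a * c * b ^ 2 * (A * D * CMj ^ 2) = (a * A) * (c * D) * CNj ^ 2 * (((N : ℝ) + 1)) ^ 2 := by
        linear_combination (a * c * A * D * (b * CMj + ((N : ℝ) + 1) * CNj)) * c2
      have e2 : a * c * b ^ 2 * (B ^ 2 * CMjm * CMjp) = (b * B) ^ 2 * CNjm * CNjp * (((N : ℝ) + 1)) ^ 2 := by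
        linear_combination b ^ 2 * B ^ 2 * (c * CMjp * c1 + (((N : ℝ) + 1) * CNjm) * c3)
      rw [e1, e2]
      nlinarith [key2]

theorem stmt_7 (n k : ℕ) (hk : 1 ≤ k) (hkn : k ≤ n - 1) (x : Fin n → ℝ)
    (hx : x ∈ GammaPlus n k) (hk1 : 0 ≤ esymm n (k + 1) x) :
    (k + 1 : ℝ) * esymm n (k + 1) x ≤ ((n - k : ℝ) / n) * esymm n 1 x * esymm n k x := by
  have hn : k + 1 ≤ n := by omega
  have hn0 : 0 < n := by omega
  set P : ℕ → ℝ := fun j => esymm n j x / ((n.choose j : ℕ) : ℝ) with hPdef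
  have hchoosepos : ∀ j, j ≤ n → (0:ℝ) < ((n.choose j : ℕ) : ℝ) := fun j hj => by
    exact_mod_cast Nat.choose_pos hj
  have hP0 : P 0 = 1 := by simp [hPdef, esymm_zero']
  have hPpos : ∀ j, 1 ≤ j → j ≤ k → 0 < P j := fun j h1 h2 =>
    div_pos (hx j h1 h2) (hchoosepos j (by omega))
  have hnewt : ∀ j, 1 ≤ j → j + 1 ≤ n → P (j - 1) * P (j + 1) ≤ P j ^ 2 := by
    intro j h1 h2
    have h := newton_ineq n j h1 h2 x
    have p1 : (0:ℝ) < ((n.choose (j-1) : ℕ) : ℝ) * ((n.choose (j+1) : ℕ) : ℝ) :=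
      mul_pos (hchoosepos _ (by omega)) (hchoosepos _ (by omega))
    have p2 : (0:ℝ) < ((n.choose j : ℕ) : ℝ) ^ 2 := by
      have := hchoosepos j (by omega); positivity
    rw [hPdef]
    simp only
    rw [div_mul_div_comm, div_pow, div_le_div_iff₀ p1 p2]
    linarith [h]
  have chain : ∀ j, 1 ≤ j → j ≤ k → P (j + 1) ≤ P 1 * P j := by
    intro j
    induction j with
    | zero => intro h1 _; exact (Nat.not_succ_le_zero 0 h1).elim
    | succ i ihi =>
      intro h1 h2
      by_cases hi : i = 0
      · subst hi
        have h := hnewt 1 le_rfl (by omega)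
        rw [show (1:ℕ) - 1 = 0 from rfl, hP0, one_mul] at h
        nlinarith [h]
      · have hi1 : 1 ≤ i := by omega
        have hQ := ihi hi1 (by omega)
        have hnew := hnewt (i + 1) (by omega) (by omega)
        simp only [Nat.add_sub_cancel] at hnew
        have hpi := hPpos i hi1 (by omega)
        have hpi1 := hPpos (i+1) (by omega) h2
        have h3 : P (i+1) ^ 2 ≤ P (i+1) * (P 1 * P i) := by nlinarith [hQ, hpi1]
        have h5 : P i * P (i + 1 + 1) ≤ P i * (P 1 * P (i + 1)) := by nlinarith [hnew, h3]
        exact le_of_mul_le_mul_left h5 hpi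
  have hQ := chain k hk le_rfl
  have hck : (0:ℝ) < ((n.choose k : ℕ) : ℝ) := hchoosepos k (by omega)
  have hck1 : (0:ℝ) < ((n.choose (k+1) : ℕ) : ℝ) := hchoosepos (k+1) hn
  have hc1' : ((n.choose 1 : ℕ) : ℝ) = (n : ℝ) := by rw [Nat.choose_one_right]
  have hid : ((n.choose (k+1) : ℕ):ℝ) * ((k:ℝ)+1) = ((n.choose k : ℕ):ℝ) * ((n:ℝ) - (k:ℝ)) := by
    have h0 := Nat.choose_succ_right_eq n k
    have h' : (((n.choose (k+1)) * (k+1) : ℕ) : ℝ) = (((n.choose k) * (n - k) : ℕ) : ℝ) := by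
      exact_mod_cast congrArg (fun t : ℕ => (t : ℝ)) h0
    push_cast [Nat.cast_sub (show k ≤ n by omega)] at h'
    linarith [h']
  simp only [hPdef] at hQ
  have hQ' := mul_le_mul_of_nonneg_left hQ
    (show (0:ℝ) ≤ ((k:ℝ)+1) * ((n.choose (k+1):ℕ):ℝ) by positivity)
  have lhs_eq : ((k:ℝ)+1) * ((n.choose (k+1):ℕ):ℝ)
      * (esymm n (k+1) x / ((n.choose (k+1):ℕ):ℝ)) = ((k:ℝ)+1) * esymm n (k+1) x := by
    field_simp
  have rhs_eq : ((k:ℝ)+1) * ((n.choose (k+1):ℕ):ℝ)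
      * ((esymm n 1 x / ((n.choose 1:ℕ):ℝ)) * (esymm n k x / ((n.choose k:ℕ):ℝ)))
      = (((n:ℝ) - (k:ℝ)) / (n:ℝ)) * esymm n 1 x * esymm n k x := by
    rw [hc1', show ((k:ℝ)+1) * ((n.choose (k+1):ℕ):ℝ)
      = ((n.choose k:ℕ):ℝ) * ((n:ℝ)-(k:ℝ)) from by linarith [hid]]
    have hnne : ((n:ℝ)) ≠ 0 := by positivity
    have hckne : ((n.choose k : ℕ):ℝ) ≠ 0 := ne_of_gt hck
    field_simp
  rw [lhs_eq, rhs_eq] at hQ'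
  exact hQ'
end

section
/- Let A be a real symmetric n×n matrix with eigenvalues in Γ_k^+, and suppose k ≥ 2. Then every entry of A is bounded in terms of the trace: |A_{ij}| ≤ c·tr(A) for a constant c depending only on n and k (in particular tr(A) > 0). -/
open Finset

attribute [local instance] Matrix.normedAddCommGroup Matrix.normedSpace

lemma aux_sum_powersetCard_one {ι : Type*} [DecidableEq ι] (s : Finset ι) (x : ι → ℝ) :
    ∑ t ∈ s.powersetCard 1, ∏ i ∈ t, x i = ∑ i ∈ s, x i := by
  rw [Finset.powersetCard_one, Finset.sum_map]
  simp

lemma aux_sq_sum {ι : Type*} [DecidableEq ι] (s : Finset ι) (x : ι → ℝ) :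
    (∑ i ∈ s, x i) ^ 2
      = ∑ i ∈ s, (x i) ^ 2 + 2 * ∑ t ∈ s.powersetCard 2, ∏ i ∈ t, x i := by
  induction s using Finset.induction with
  | empty =>
    rw [Finset.powersetCard_eq_empty.mpr (by simp)]
    simp
  | @insert a s ha ih =>
    rw [Finset.sum_insert ha, Finset.sum_insert ha,
      show (2 : ℕ) = Nat.succ 1 from rfl, Finset.powersetCard_succ_insert ha,
      Finset.sum_union, Finset.sum_image ?inj]
    · have : ∑ t ∈ s.powersetCard 1, ∏ i ∈ insert a t, x i
          = x a * ∑ i ∈ s, x i := by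
        rw [← aux_sum_powersetCard_one s x, Finset.mul_sum]
        refine Finset.sum_congr rfl fun t ht => ?_
        rw [Finset.mem_powersetCard] at ht
        rw [Finset.prod_insert (fun h => ha (ht.1 h))]
      rw [this]
      ring_nf
      nlinarith [ih]
    · intro t ht u hu h
      rw [Finset.mem_coe, Finset.mem_powersetCard] at ht hu
      have hat : a ∉ t := fun h => ha (ht.1 h)
      have hau : a ∉ u := fun h => ha (hu.1 h)
      have := congrArg (fun w => Finset.erase w a) h
      simpa [Finset.erase_insert hat, Finset.erase_insert hau] using this
    · rw [Finset.disjoint_left]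
      intro t ht htim
      rw [Finset.mem_powersetCard] at ht
      rcases Finset.mem_image.mp htim with ⟨u, hu, rfl⟩
      exact ha (ht.1 (Finset.mem_insert_self a u))

theorem stmt_13 (n k : ℕ) (hk : 2 ≤ k) (hkn : k ≤ n) :
    ∃ c : ℝ, 0 < c ∧
      ∀ (A : Matrix (Fin n) (Fin n) ℝ) (hA : A.IsHermitian),
        (∀ j : ℕ, 1 ≤ j → j ≤ k → 0 < esymm n j hA.eigenvalues) →
          0 < A.trace ∧ ∀ i j : Fin n, |A i j| ≤ c * A.trace := by
  have hn : 2 ≤ n := le_trans hk hkn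
  refine ⟨n, by positivity, ?_⟩
  intro A hA hσ
  set lam := hA.eigenvalues with hlam
  set U : Matrix (Fin n) (Fin n) ℝ := (hA.eigenvectorUnitary : Matrix (Fin n) (Fin n) ℝ)
    with hU
  have hsp : A = U * Matrix.diagonal lam * star U := by
    have := hA.spectral_theorem
    simpa [hU] using this
  -- trace = sum of eigenvalues
  have hstar : star U * U = 1 := Unitary.coe_star_mul_self hA.eigenvectorUnitary
  have hstar' : U * star U = 1 := Unitary.coe_mul_star_self hA.eigenvectorUnitary
  have htr : A.trace = ∑ i, lam i := by
    rw [hsp, Matrix.trace_mul_comm, ← mul_assoc, hstar, one_mul, Matrix.trace_diagonal]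
  -- positivity of sum of eigenvalues
  have h1 := hσ 1 le_rfl (le_trans one_le_two hk)
  rw [esymm, aux_sum_powersetCard_one] at h1
  have hS : 0 < ∑ i, lam i := h1
  -- eigenvalue bound
  have h2 := hσ 2 one_le_two hk
  rw [esymm] at h2
  have hsq : ∑ i, (lam i) ^ 2 < (∑ i, lam i) ^ 2 := by
    have := aux_sq_sum (Finset.univ : Finset (Fin n)) lam
    nlinarith
  have heig : ∀ m : Fin n, |lam m| ≤ ∑ i, lam i := by
    intro m
    have h3 : (lam m) ^ 2 ≤ ∑ i, (lam i) ^ 2 :=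
      Finset.single_le_sum (fun i _ => sq_nonneg (lam i)) (Finset.mem_univ m)
    nlinarith [sq_abs (lam m), abs_nonneg (lam m)]
  -- unitary entries bounded by 1
  have hUent : ∀ i m : Fin n, |U i m| ≤ 1 := by
    intro i m
    have h4 : ∑ p, U i p * U i p = 1 := by
      have := congrArg (fun M => M i i) hstar'
      simpa [Matrix.mul_apply, Matrix.one_apply, Matrix.star_apply] using this
    have h5 : (U i m) ^ 2 ≤ 1 := by
      rw [← h4]
      calc (U i m) ^ 2 = U i m * U i m := sq (U i m) ▸ by ring
        _ ≤ ∑ p, U i p * U i p :=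
          Finset.single_le_sum (fun p _ => mul_self_nonneg (U i p)) (Finset.mem_univ m)
    nlinarith [abs_nonneg (U i m), sq_abs (U i m)]
  refine ⟨by rw [htr]; exact hS, ?_⟩
  intro i j
  have hentry : A i j = ∑ m, U i m * lam m * U j m := by
    rw [hsp]
    simp [Matrix.mul_apply, Matrix.diagonal, Matrix.star_apply, Finset.sum_mul]
  rw [hentry, htr]
  calc |∑ m, U i m * lam m * U j m| ≤ ∑ m, |U i m * lam m * U j m| :=
        Finset.abs_sum_le_sum_abs _ _
    _ ≤ ∑ _m : Fin n, ∑ i, lam i := by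
        refine Finset.sum_le_sum fun m _ => ?_
        rw [abs_mul, abs_mul]
        calc |U i m| * |lam m| * |U j m| ≤ |lam m| * |U j m| :=
              mul_le_mul_of_nonneg_right
                (mul_le_of_le_one_left (abs_nonneg _) (hUent i m)) (abs_nonneg _)
          _ ≤ |lam m| * 1 := mul_le_mul_of_nonneg_left (hUent j m) (abs_nonneg _)
          _ = |lam m| := mul_one _
          _ ≤ ∑ i, lam i := heig m
    _ = n * ∑ i, lam i := by rw [Finset.sum_const]; simp [mul_comm]
end
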